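/- arXiv:0806.1022 — 5 statements merged into one kernel-verified Lean document; each statement's English description precedes it below -/
import Mathlib

section
/- Let p : 𝔅 → G be an upper semicontinuous Banach bundle over a second countable locally compact Hausdorff space G and let ν be a generalized Radon measure on 𝔅. Then there is a Radon measure μ on G such that for every nonnegative φ ∈ C_c(G), ∫_G φ dμ = sup{ |ν(f)| : f ∈ Γ_c(G;𝔅) and ‖f(x)‖ ≤ φ(x) for all x ∈ G }. -/
open MeasureTheory Filter Topology Set

/-- An upper semicontinuous Banach bundle over a topological space `X`, with fibres
`Fib x` (each a complex Banach space), total space `(x : X) × Fib x` and bundle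
projection `Sigma.fst`.  The axioms are (B1)–(B4) of the paper, together with the
standing assumption that the bundle has enough sections. -/
structure USCBanachBundle (X : Type) [TopologicalSpace X] (Fib : X → Type)
    [∀ x, NormedAddCommGroup (Fib x)] [∀ x, NormedSpace ℂ (Fib x)]
    [∀ x, CompleteSpace (Fib x)] : Type where
  /-- the topology on the total space `Σ x, Fib x` -/
  topTotal : TopologicalSpace ((x : X) × Fib x)
  /-- the projection is continuous -/
  continuous_proj : @Continuous ((x : X) × Fib x) X topTotal inferInstance
    fun b => b.1
  /-- the projection is an open map -/
  isOpenMap_proj : @IsOpenMap ((x : X) × Fib x) X topTotal inferInstance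
    fun b => b.1
  /-- (B1): the norm is upper semicontinuous on the total space -/
  isOpen_norm_lt : ∀ r : ℝ, @IsOpen ((x : X) × Fib x) topTotal { b | ‖b.2‖ < r }
  /-- (B2): addition is continuous on pairs lying in a common fibre -/
  continuous_add :
    @Continuous { q : ((x : X) × Fib x) × ((x : X) × Fib x) // q.1.1 = q.2.1 }
      ((x : X) × Fib x)
      (@instTopologicalSpaceSubtype _ _
        (@instTopologicalSpaceProd _ _ topTotal topTotal))
      topTotal
      (fun q => ⟨q.1.1.1, q.1.1.2 + cast (congrArg Fib q.2.symm) q.1.2.2⟩)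
  /-- (B3): scalar multiplication is continuous -/
  continuous_smul : ∀ c : ℂ,
    @Continuous ((x : X) × Fib x) ((x : X) × Fib x) topTotal topTotal
      fun b => ⟨b.1, c • b.2⟩
  /-- (B4): if `p (a i) → x` and `‖a i‖ → 0` then `a i → 0ₓ` (stated for filters,
  which is equivalent to the statement for nets) -/
  tendsto_zero : ∀ {ι : Type} (l : Filter ι) (a : ι → (x : X) × Fib x) (x : X),
    Filter.Tendsto (fun i => (a i).1) l (nhds x) →
    Filter.Tendsto (fun i => ‖(a i).2‖) l (nhds (0 : ℝ)) →
    Filter.Tendsto a l (@nhds _ topTotal (⟨x, 0⟩ : (x : X) × Fib x))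
  /-- the bundle has enough sections -/
  enough_sections : ∀ (x : X) (v : Fib x), ∃ f : ∀ y, Fib y,
    (@Continuous X ((x : X) × Fib x) inferInstance topTotal fun y => ⟨y, f y⟩) ∧
      f x = v

namespace USCBanachBundle

variable {X : Type} [TopologicalSpace X] {Fib : X → Type}
  [∀ x, NormedAddCommGroup (Fib x)] [∀ x, NormedSpace ℂ (Fib x)]
  [∀ x, CompleteSpace (Fib x)]

/-- `f` is a continuous (global) section of the bundle `B`. -/
def IsContSection (B : USCBanachBundle X Fib) (f : ∀ x, Fib x) : Prop :=
  @Continuous X ((x : X) × Fib x) inferInstance B.topTotal fun x => ⟨x, f x⟩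

/-- membership in `Γ_c(X;𝔅)`: continuous compactly supported sections. -/
def MemGammaC (B : USCBanachBundle X Fib) (f : ∀ x, Fib x) : Prop :=
  B.IsContSection f ∧ ∃ K : Set X, IsCompact K ∧ ∀ x ∉ K, f x = 0

/-- membership in `Γ₀(X;𝔅)`: continuous sections vanishing at infinity. -/
def MemGammaZero (B : USCBanachBundle X Fib) (f : ∀ x, Fib x) : Prop :=
  B.IsContSection f ∧ ∀ ε : ℝ, 0 < ε → IsCompact { x | ε ≤ ‖f x‖ }

/-- The Banach space `Γ₀(X;𝔅)` is separable: there is a countable set of sections in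
`Γ₀` which is dense for the supremum norm. -/
def SeparableGammaZero (B : USCBanachBundle X Fib) : Prop :=
  ∃ D : Set (∀ x, Fib x), D.Countable ∧ (∀ g ∈ D, B.MemGammaZero g) ∧
    ∀ f, B.MemGammaZero f → ∀ ε : ℝ, 0 < ε → ∃ g ∈ D, ∀ x, ‖f x - g x‖ < ε

/-- uniform convergence of a sequence of sections to a section. -/
def UnifTendsto (B : USCBanachBundle X Fib) (F : ℕ → ∀ x, Fib x)
    (f : ∀ x, Fib x) : Prop :=
  ∀ ε : ℝ, 0 < ε → ∃ N : ℕ, ∀ n ≥ N, ∀ x, ‖F n x - f x‖ < ε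

/-- continuity of `ν` in the inductive limit topology: `ν fₙ → ν f` whenever `fₙ → f`
uniformly with all supports contained in a fixed compact set. -/
def ILTContinuous (B : USCBanachBundle X Fib) (ν : (∀ x, Fib x) → ℂ) : Prop :=
  ∀ (F : ℕ → ∀ x, Fib x) (f : ∀ x, Fib x) (K : Set X),
    (∀ n, B.MemGammaC (F n)) → B.MemGammaC f → IsCompact K →
    (∀ n, ∀ x ∉ K, F n x = 0) → B.UnifTendsto F f →
    Filter.Tendsto (fun n => ν (F n)) Filter.atTop (nhds (ν f))

/-- a generalized Radon measure on the bundle `B`: a linear functional on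
`Γ_c(X;𝔅)` which is continuous in the inductive limit topology. -/
def IsGRM (B : USCBanachBundle X Fib) (ν : (∀ x, Fib x) → ℂ) : Prop :=
  (∀ f g, B.MemGammaC f → B.MemGammaC g →
    ν (fun x => f x + g x) = ν f + ν g) ∧
  (∀ (c : ℂ) (f), B.MemGammaC f → ν (fun x => c • f x) = c * ν f) ∧
  B.ILTContinuous ν

/-- `μ` is the total variation `|ν|` of the generalized Radon measure `ν`: a Radon
measure (Borel measure, finite on compacts) such that for every nonnegative
`φ ∈ C_c(X)`, `∫ φ dμ = sup { |ν f| : f ∈ Γ_c(X;𝔅), ‖f x‖ ≤ φ x for all x }`. -/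
def IsTotalVariation [MeasurableSpace X] (B : USCBanachBundle X Fib)
    (ν : (∀ x, Fib x) → ℂ) (μ : Measure X) : Prop :=
  (∀ K : Set X, IsCompact K → μ K < ⊤) ∧
  ∀ φ : X → ℝ, Continuous φ → HasCompactSupport φ → (∀ x, 0 ≤ φ x) →
    ∫ x, φ x ∂μ =
      sSup { r : ℝ | ∃ f, B.MemGammaC f ∧ (∀ x, ‖f x‖ ≤ φ x) ∧ r = ‖ν f‖ }

/-- membership in `Σ_c(X;𝔅)`: bounded sections which are pointwise limits (in the
topology of the total space) of a uniformly bounded sequence in `Γ_c(X;𝔅)` whose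
supports are contained in a fixed compact set. -/
def MemSigmaC (B : USCBanachBundle X Fib) (f : ∀ x, Fib x) : Prop :=
  (∃ M : ℝ, ∀ x, ‖f x‖ ≤ M) ∧
  ∃ (F : ℕ → ∀ x, Fib x) (K : Set X) (M : ℝ),
    (∀ n, B.MemGammaC (F n)) ∧ (∀ n x, ‖F n x‖ ≤ M) ∧ IsCompact K ∧
    (∀ n, ∀ x ∉ K, F n x = 0) ∧
    ∀ x, Filter.Tendsto (fun n => (⟨x, F n x⟩ : (x : X) × Fib x)) Filter.atTop
      (@nhds _ B.topTotal (⟨x, f x⟩ : (x : X) × Fib x))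

end USCBanachBundle


namespace USCBanachBundle

variable {X : Type} [TopologicalSpace X] {Fib : X → Type}
  [∀ x, NormedAddCommGroup (Fib x)] [∀ x, NormedSpace ℂ (Fib x)]
  [∀ x, CompleteSpace (Fib x)]
  (B : USCBanachBundle X Fib)

lemma contSection_zero : B.IsContSection (fun x => (0 : Fib x)) := by
  letI := B.topTotal
  rw [IsContSection, continuous_iff_continuousAt]
  intro x
  exact B.tendsto_zero (nhds x) (fun y => ⟨y, (0 : Fib y)⟩) x tendsto_id
    (by simpa using tendsto_const_nhds)

lemma contSection_smul {f : ∀ x, Fib x} (c : ℂ) (hf : B.IsContSection f) :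
    B.IsContSection (fun x => c • f x) :=
  @Continuous.comp X ((x : X) × Fib x) ((x : X) × Fib x) _ B.topTotal B.topTotal
    _ _ (B.continuous_smul c) hf

lemma contSection_add {f g : ∀ x, Fib x} (hf : B.IsContSection f)
    (hg : B.IsContSection g) : B.IsContSection (fun x => f x + g x) := by
  letI := B.topTotal
  have hΦ : Continuous (fun x =>
      (⟨(⟨x, f x⟩, ⟨x, g x⟩), rfl⟩ :
        { q : ((x : X) × Fib x) × ((x : X) × Fib x) // q.1.1 = q.2.1 })) :=
    Continuous.subtype_mk (hf.prodMk hg) _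
  exact B.continuous_add.comp hΦ

/-- norm of a continuous section gives open sublevel sets -/
lemma isOpen_norm_lt_section {f : ∀ x, Fib x} (hf : B.IsContSection f) (r : ℝ) :
    IsOpen { x | ‖f x‖ < r } := by
  exact @IsOpen.preimage X ((x : X) × Fib x) _ B.topTotal _ hf _
    (B.isOpen_norm_lt r)

lemma tendsto_of_norm_tendsto {f : ∀ x, Fib x} {x₀ : X}
    (h : Filter.Tendsto (fun x => ‖f x‖) (nhds x₀) (nhds (0 : ℝ))) :
    Filter.Tendsto (fun x => (⟨x, f x⟩ : (x : X) × Fib x)) (nhds x₀)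
      (@nhds _ B.topTotal ⟨x₀, 0⟩) :=
  B.tendsto_zero (nhds x₀) (fun y => ⟨y, f y⟩) x₀ tendsto_id h

lemma contSection_mulC {f : ∀ x, Fib x} (h : X → ℂ) (hh : Continuous h)
    (hf : B.IsContSection f) : B.IsContSection (fun x => h x • f x) := by
  letI := B.topTotal
  rw [IsContSection, continuous_iff_continuousAt]
  intro x₀
  -- local bound for ‖f x‖
  have hb : ∀ᶠ x in nhds x₀, ‖f x‖ < ‖f x₀‖ + 1 :=
    (B.isOpen_norm_lt_section hf (‖f x₀‖ + 1)).mem_nhds (by simp)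
  set g : ∀ x, Fib x := fun x => (h x - h x₀) • f x with hg
  have hgnorm : Filter.Tendsto (fun x => ‖g x‖) (nhds x₀) (nhds 0) := by
    have h1 : Filter.Tendsto (fun x => ‖h x - h x₀‖ * (‖f x₀‖ + 1)) (nhds x₀)
        (nhds 0) := by
      have : Filter.Tendsto (fun x => h x - h x₀) (nhds x₀) (nhds 0) := by
        have := (hh.tendsto x₀).sub
          (tendsto_const_nhds : Filter.Tendsto (fun _ : X => h x₀) (nhds x₀) _)
        simpa using this
      simpa using (this.norm.mul_const (‖f x₀‖ + 1))
    refine squeeze_zero' (by filter_upwards with x using norm_nonneg _) ?_ h1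
    filter_upwards [hb] with x hx
    rw [hg]; simp only [norm_smul]
    exact mul_le_mul_of_nonneg_left (le_of_lt hx) (norm_nonneg _) |>.trans_eq rfl
  have hgt : Filter.Tendsto (fun x => (⟨x, g x⟩ : (x : X) × Fib x)) (nhds x₀)
      (nhds ⟨x₀, g x₀⟩) := by
    have : (⟨x₀, g x₀⟩ : (x : X) × Fib x) = ⟨x₀, 0⟩ := by
      simp [hg]
    rw [this]
    exact B.tendsto_of_norm_tendsto hgnorm
  have h1 : ContinuousAt (fun x => (⟨x, h x₀ • f x⟩ : (x : X) × Fib x)) x₀ :=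
    (B.contSection_smul (h x₀) hf).continuousAt
  have hgt' : ContinuousAt (fun x => (⟨x, g x⟩ : (x : X) × Fib x)) x₀ := by
    rw [ContinuousAt]; exact hgt
  have hΦ : ContinuousAt (fun x =>
      (⟨(⟨x, h x₀ • f x⟩, ⟨x, g x⟩), rfl⟩ :
        { q : ((x : X) × Fib x) × ((x : X) × Fib x) // q.1.1 = q.2.1 })) x₀ := by
    rw [ContinuousAt, tendsto_subtype_rng]
    exact h1.prodMk hgt'
  have key : ContinuousAt (fun x => (⟨x, h x₀ • f x + g x⟩ : (x : X) × Fib x)) x₀ :=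
    ContinuousAt.comp (Continuous.continuousAt B.continuous_add) hΦ
  have : (fun x => (⟨x, h x₀ • f x + g x⟩ : (x : X) × Fib x)) =
      (fun x => (⟨x, h x • f x⟩ : (x : X) × Fib x)) := by
    funext x
    congr 1
    show h x₀ • f x + (h x - h x₀) • f x = h x • f x
    rw [sub_smul]
    abel
  rwa [this] at key

end USCBanachBundle

namespace USCBanachBundle

variable {X : Type} [TopologicalSpace X] {Fib : X → Type}
  [∀ x, NormedAddCommGroup (Fib x)] [∀ x, NormedSpace ℂ (Fib x)]
  [∀ x, CompleteSpace (Fib x)]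
  (B : USCBanachBundle X Fib)

lemma memGammaC_zero : B.MemGammaC (fun x => (0 : Fib x)) :=
  ⟨B.contSection_zero, ∅, isCompact_empty, fun _ _ => rfl⟩

lemma memGammaC_smul {f : ∀ x, Fib x} (c : ℂ) (hf : B.MemGammaC f) :
    B.MemGammaC (fun x => c • f x) := by
  obtain ⟨hc, K, hK, hsupp⟩ := hf
  exact ⟨B.contSection_smul c hc, K, hK, fun x hx => by simp only [hsupp x hx, smul_zero]⟩

lemma memGammaC_add {f g : ∀ x, Fib x} (hf : B.MemGammaC f) (hg : B.MemGammaC g) :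
    B.MemGammaC (fun x => f x + g x) := by
  obtain ⟨hc, K, hK, hsupp⟩ := hf
  obtain ⟨hc', K', hK', hsupp'⟩ := hg
  refine ⟨B.contSection_add hc hc', K ∪ K', hK.union hK', fun x hx => ?_⟩
  simp only [hsupp x (fun h => hx (Or.inl h)), hsupp' x (fun h => hx (Or.inr h)), add_zero]

lemma memGammaC_mulC {f : ∀ x, Fib x} (h : X → ℂ) (hh : Continuous h)
    (hf : B.MemGammaC f) : B.MemGammaC (fun x => h x • f x) := by
  obtain ⟨hc, K, hK, hsupp⟩ := hf
  exact ⟨B.contSection_mulC h hh hc, K, hK,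
    fun x hx => by simp only [hsupp x hx, smul_zero]⟩

variable {ν : (∀ x, Fib x) → ℂ}

lemma nu_zero (hν : B.IsGRM ν) : ν (fun x => (0 : Fib x)) = 0 := by
  have h0 := hν.2.1 0 (fun x => (0 : Fib x)) B.memGammaC_zero
  simpa using h0

lemma nu_bound_one (hν : B.IsGRM ν) {K : Set X} (hK : IsCompact K) :
    ∃ C : ℝ, 0 ≤ C ∧ ∀ f, B.MemGammaC f → (∀ x ∉ K, f x = 0) →
      (∀ x, ‖f x‖ ≤ 1) → ‖ν f‖ ≤ C := by
  by_contra hcon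
  push_neg at hcon
  have h' : ∀ n : ℕ, ∃ f, B.MemGammaC f ∧ (∀ x ∉ K, f x = 0) ∧
      (∀ x, ‖f x‖ ≤ 1) ∧ (n : ℝ) < ‖ν f‖ := by
    intro n
    obtain ⟨f, h1, h2, h3, h4⟩ := hcon n (Nat.cast_nonneg n)
    exact ⟨f, h1, h2, h3, h4⟩
  choose F hF1 hF2 hF3 hF4 using h'
  set g : ℕ → ∀ x, Fib x := fun n x => ((n : ℂ) + 1)⁻¹ • F n x with hgdef
  have hnc : ∀ n : ℕ, ‖(n : ℂ) + 1‖ = (n : ℝ) + 1 := by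
    intro n
    rw [show ((n : ℂ) + 1) = ((n + 1 : ℕ) : ℂ) by push_cast; ring,
      RCLike.norm_natCast]
    push_cast; ring
  have hnorm : ∀ n x, ‖g n x‖ ≤ ((n : ℝ) + 1)⁻¹ := by
    intro n x
    rw [hgdef]
    simp only [norm_smul, norm_inv]
    rw [hnc n]
    have : (0:ℝ) < ((n : ℝ) + 1)⁻¹ := by positivity
    calc ((n:ℝ) + 1)⁻¹ * ‖F n x‖ ≤ ((n:ℝ) + 1)⁻¹ * 1 :=
          mul_le_mul_of_nonneg_left (hF3 n x) (le_of_lt this)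
      _ = ((n:ℝ) + 1)⁻¹ := mul_one _
  have hmem : ∀ n, B.MemGammaC (g n) := fun n => B.memGammaC_smul _ (hF1 n)
  have hsupp : ∀ n, ∀ x ∉ K, g n x = 0 := by
    intro n x hx
    rw [hgdef]; simp only [hF2 n x hx, smul_zero]
  have hunif : B.UnifTendsto g (fun x => (0 : Fib x)) := by
    intro ε hε
    obtain ⟨N, hN⟩ := exists_nat_gt (1 / ε)
    refine ⟨N, fun n hn x => ?_⟩
    have h1 : ‖g n x - 0‖ ≤ ((n : ℝ) + 1)⁻¹ := by
      rw [sub_zero]; exact hnorm n x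
    have h2 : ((n : ℝ) + 1)⁻¹ < ε := by
      rw [inv_lt_comm₀ (by positivity) hε]
      calc ε⁻¹ = 1 / ε := (one_div ε).symm
        _ < N := hN
        _ ≤ (n : ℝ) := by exact_mod_cast hn
        _ < (n : ℝ) + 1 := by linarith
    linarith
  have htend := hν.2.2 g (fun x => (0 : Fib x)) K hmem B.memGammaC_zero hK hsupp hunif
  rw [B.nu_zero hν] at htend
  have hlow : ∀ n : ℕ, 1 ≤ n → (1:ℝ)/2 ≤ ‖ν (g n)‖ := by
    intro n hn
    have hval : ν (g n) = ((n : ℂ) + 1)⁻¹ * ν (F n) := hν.2.1 _ _ (hF1 n)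
    rw [hval, norm_mul, norm_inv]
    rw [hnc n]
    have h4 := hF4 n
    have hn1 : (1:ℝ) ≤ (n:ℝ) := by exact_mod_cast hn
    rw [inv_mul_eq_div, le_div_iff₀ (by positivity : (0:ℝ) < (n:ℝ)+1)]
    nlinarith
  have hev : ∀ᶠ n in Filter.atTop, ‖ν (g n)‖ < 1/2 := by
    have := htend.norm
    simp only [norm_zero] at this
    exact this.eventually (Filter.Tendsto.eventually_lt_const (by norm_num) tendsto_id)
  obtain ⟨n, hn1, hn2⟩ := (hev.and (Filter.eventually_ge_atTop 1)).exists
  exact absurd (hlow n hn2) (not_le.mpr hn1)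

lemma nu_bound (hν : B.IsGRM ν) {K : Set X} (hK : IsCompact K) :
    ∃ C : ℝ, 0 ≤ C ∧ ∀ f M, B.MemGammaC f → (∀ x ∉ K, f x = 0) → 0 ≤ M →
      (∀ x, ‖f x‖ ≤ M) → ‖ν f‖ ≤ C * M := by
  obtain ⟨C, hC0, hC⟩ := B.nu_bound_one hν hK
  refine ⟨C, hC0, fun f M hf hsupp hM hbound => ?_⟩
  rcases eq_or_lt_of_le hM with hM0 | hMpos
  · have hf0 : f = fun x => (0 : Fib x) :=
      funext fun x => norm_le_zero_iff.mp (by rw [← hM0] at hbound; exact hbound x)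
    rw [hf0, B.nu_zero hν]
    simp [← hM0]
  · have hMC : ‖(M : ℂ)‖ = M := by
      rw [Complex.norm_real, Real.norm_eq_abs, abs_of_pos hMpos]
    set g : ∀ x, Fib x := fun x => ((M : ℂ))⁻¹ • f x with hgdef
    have hg : B.MemGammaC g := B.memGammaC_smul _ hf
    have hgs : ∀ x ∉ K, g x = 0 := fun x hx => by
      simp only [hgdef, hsupp x hx, smul_zero]
    have hgn : ∀ x, ‖g x‖ ≤ 1 := by
      intro x
      simp only [hgdef, norm_smul, norm_inv, hMC]
      rw [inv_mul_le_iff₀ hMpos, mul_one]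
      exact hbound x
    have hfg : f = fun x => (M : ℂ) • g x := by
      funext x
      simp only [hgdef, smul_smul, mul_inv_cancel₀
        (by exact_mod_cast ne_of_gt hMpos : (M : ℂ) ≠ 0), one_smul]
    calc ‖ν f‖ = ‖ν (fun x => (M : ℂ) • g x)‖ := by rw [← hfg]
      _ = ‖(M : ℂ) * ν g‖ := by rw [hν.2.1 _ _ hg]
      _ = M * ‖ν g‖ := by rw [norm_mul, hMC]
      _ ≤ M * C := mul_le_mul_of_nonneg_left (hC g hg hgs hgn) (le_of_lt hMpos)
      _ = C * M := mul_comm _ _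

end USCBanachBundle

open Pointwise

namespace USCBanachBundle

variable {X : Type} [TopologicalSpace X] {Fib : X → Type}
  [∀ x, NormedAddCommGroup (Fib x)] [∀ x, NormedSpace ℂ (Fib x)]
  [∀ x, CompleteSpace (Fib x)]

/-- the set of values `‖ν f‖` over sections dominated by `φ` -/
def Sset (B : USCBanachBundle X Fib) (ν : (∀ x, Fib x) → ℂ) (φ : X → ℝ) :
    Set ℝ :=
  { r : ℝ | ∃ f, B.MemGammaC f ∧ (∀ x, ‖f x‖ ≤ φ x) ∧ r = ‖ν f‖ }

variable (B : USCBanachBundle X Fib) {ν : (∀ x, Fib x) → ℂ}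

lemma zero_mem_Sset (hν : B.IsGRM ν) {φ : X → ℝ} (hφ0 : ∀ x, 0 ≤ φ x) :
    (0 : ℝ) ∈ Sset B ν φ :=
  ⟨fun x => 0, B.memGammaC_zero, fun x => by simpa using hφ0 x,
    by rw [B.nu_zero hν, norm_zero]⟩

lemma Sset_nonneg {φ : X → ℝ} {r : ℝ} (hr : r ∈ Sset B ν φ) : 0 ≤ r := by
  obtain ⟨f, -, -, rfl⟩ := hr; exact norm_nonneg _

lemma Sset_subset_of_le {φ ψ : X → ℝ} (h : ∀ x, φ x ≤ ψ x) :
    Sset B ν φ ⊆ Sset B ν ψ := by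
  rintro r ⟨f, h1, h2, rfl⟩
  exact ⟨f, h1, fun x => (h2 x).trans (h x), rfl⟩

lemma bddAbove_Sset (hν : B.IsGRM ν) {φ : X → ℝ} (hφ : Continuous φ)
    (hφc : HasCompactSupport φ) : BddAbove (Sset B ν φ) := by
  obtain ⟨C, hC0, hC⟩ := B.nu_bound hν hφc
  obtain ⟨M0, hM0⟩ := hφ.bddAbove_range_of_hasCompactSupport hφc
  set M : ℝ := max M0 0 with hMdef
  have hM : ∀ x, φ x ≤ M :=
    fun x => le_max_of_le_left (hM0 (Set.mem_range_self x))
  refine ⟨C * M, ?_⟩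
  rintro r ⟨f, h1, h2, rfl⟩
  refine hC f M h1 (fun x hx => ?_) (le_max_right _ _)
    (fun x => (h2 x).trans (hM x))
  have : φ x = 0 := image_eq_zero_of_notMem_tsupport hx
  exact norm_le_zero_iff.mp ((h2 x).trans_eq this)

/-- monotonicity of the functional -/
lemma sSup_Sset_mono (hν : B.IsGRM ν) {φ ψ : X → ℝ} (hψ : Continuous ψ)
    (hψc : HasCompactSupport ψ) (hφ0 : ∀ x, 0 ≤ φ x) (h : ∀ x, φ x ≤ ψ x) :
    sSup (Sset B ν φ) ≤ sSup (Sset B ν ψ) :=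
  csSup_le_csSup (B.bddAbove_Sset hν hψ hψc) ⟨0, B.zero_mem_Sset hν hφ0⟩
    (B.Sset_subset_of_le h)

lemma sSup_Sset_nonneg (hν : B.IsGRM ν) {φ : X → ℝ} (hφ : Continuous φ)
    (hφc : HasCompactSupport φ) (hφ0 : ∀ x, 0 ≤ φ x) :
    0 ≤ sSup (Sset B ν φ) :=
  le_csSup (B.bddAbove_Sset hν hφ hφc) (B.zero_mem_Sset hν hφ0)

/-- homogeneity of the functional -/
lemma sSup_Sset_smul (hν : B.IsGRM ν) {φ : X → ℝ} (hφ : Continuous φ)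
    (hφc : HasCompactSupport φ) (hφ0 : ∀ x, 0 ≤ φ x) {c : ℝ} (hc : 0 ≤ c) :
    sSup (Sset B ν (fun x => c * φ x)) = c * sSup (Sset B ν φ) := by
  rcases eq_or_lt_of_le hc with hc0 | hcpos
  · subst hc0
    simp only [zero_mul]
    have : Sset B ν (fun _ => (0:ℝ)) = {0} := by
      ext r
      constructor
      · rintro ⟨f, h1, h2, rfl⟩
        have hf0 : f = fun x => (0 : Fib x) :=
          funext fun x => norm_le_zero_iff.mp (h2 x)
        rw [hf0, B.nu_zero hν, norm_zero]; rfl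
      · rintro rfl
        exact B.zero_mem_Sset hν (fun _ => le_refl 0)
    rw [this, csSup_singleton]
  · have himage : Sset B ν (fun x => c * φ x) = (fun r => c * r) '' (Sset B ν φ) := by
      ext r
      constructor
      · rintro ⟨f, h1, h2, rfl⟩
        refine ⟨‖ν (fun x => ((c⁻¹ : ℝ) : ℂ) • f x)‖,
          ⟨fun x => ((c⁻¹ : ℝ) : ℂ) • f x, B.memGammaC_smul _ h1, fun x => ?_, rfl⟩, ?_⟩
        · rw [norm_smul, Complex.norm_real, Real.norm_eq_abs,
            abs_of_pos (inv_pos.mpr hcpos), inv_mul_le_iff₀ hcpos]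
          exact h2 x
        · have : (fun x => (c : ℂ) • ((c⁻¹ : ℝ) : ℂ) • f x) = f := by
            funext x
            rw [smul_smul]
            norm_cast
            rw [mul_inv_cancel₀ (ne_of_gt hcpos)]
            exact one_smul _ _
          calc c * ‖ν (fun x => ((c⁻¹ : ℝ) : ℂ) • f x)‖
              = ‖(c : ℂ) * ν (fun x => ((c⁻¹ : ℝ) : ℂ) • f x)‖ := by
                rw [norm_mul, Complex.norm_real, Real.norm_eq_abs, abs_of_pos hcpos]
            _ = ‖ν (fun x => (c : ℂ) • ((c⁻¹ : ℝ) : ℂ) • f x)‖ := by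
                rw [hν.2.1 _ _ (B.memGammaC_smul _ h1)]
            _ = ‖ν f‖ := by rw [this]
      · rintro ⟨r, ⟨f, h1, h2, rfl⟩, rfl⟩
        refine ⟨fun x => (c : ℂ) • f x, B.memGammaC_smul _ h1, fun x => ?_, ?_⟩
        · rw [norm_smul, Complex.norm_real, Real.norm_eq_abs, abs_of_pos hcpos]
          exact mul_le_mul_of_nonneg_left (h2 x) hc
        · rw [hν.2.1 _ _ h1, norm_mul, Complex.norm_real, Real.norm_eq_abs,
            abs_of_pos hcpos]
    rw [himage]
    have h1 : (Sset B ν φ).Nonempty := ⟨0, B.zero_mem_Sset hν hφ0⟩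
    have h2 : BddAbove (Sset B ν φ) := B.bddAbove_Sset hν hφ hφc
    rw [show (fun r => c * r) '' (Sset B ν φ) = c • (Sset B ν φ) by
      ext r; simp [Set.mem_smul_set, smul_eq_mul]]
    rw [Real.sSup_smul_of_nonneg hc]
    rfl

end USCBanachBundle

namespace USCBanachBundle

variable {X : Type} [TopologicalSpace X] {Fib : X → Type}
  [∀ x, NormedAddCommGroup (Fib x)] [∀ x, NormedSpace ℂ (Fib x)]
  [∀ x, CompleteSpace (Fib x)]
  (B : USCBanachBundle X Fib) {ν : (∀ x, Fib x) → ℂ}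

lemma exists_unimodular (z : ℂ) : ∃ c : ℂ, ‖c‖ = 1 ∧ c * z = (‖z‖ : ℂ) := by
  rcases eq_or_ne z 0 with rfl | hz
  · exact ⟨1, by simp, by simp⟩
  · refine ⟨(‖z‖ : ℂ) / z, ?_, ?_⟩
    · rw [norm_div, Complex.norm_real, Real.norm_eq_abs, abs_of_nonneg (norm_nonneg z),
        div_self (norm_ne_zero_iff.mpr hz)]
    · rw [div_mul_cancel₀ _ hz]

lemma sSup_Sset_add (hν : B.IsGRM ν) {φ ψ : X → ℝ}
    (hφ : Continuous φ) (hφc : HasCompactSupport φ) (hφ0 : ∀ x, 0 ≤ φ x)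
    (hψ : Continuous ψ) (hψc : HasCompactSupport ψ) (hψ0 : ∀ x, 0 ≤ ψ x) :
    sSup (Sset B ν (fun x => φ x + ψ x)) =
      sSup (Sset B ν φ) + sSup (Sset B ν ψ) := by
  have hsum : Continuous (fun x => φ x + ψ x) := hφ.add hψ
  have hsumc : HasCompactSupport (fun x => φ x + ψ x) := hφc.add hψc
  have hsum0 : ∀ x, 0 ≤ φ x + ψ x := fun x => add_nonneg (hφ0 x) (hψ0 x)
  have hbdd := B.bddAbove_Sset hν hsum hsumc
  have hbddφ := B.bddAbove_Sset hν hφ hφc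
  have hbddψ := B.bddAbove_Sset hν hψ hψc
  have hneφ : (Sset B ν φ).Nonempty := ⟨0, B.zero_mem_Sset hν hφ0⟩
  have hneψ : (Sset B ν ψ).Nonempty := ⟨0, B.zero_mem_Sset hν hψ0⟩
  have hnesum : (Sset B ν (fun x => φ x + ψ x)).Nonempty :=
    ⟨0, B.zero_mem_Sset hν hsum0⟩
  apply le_antisymm
  · -- subadditivity
    obtain ⟨C, hC0, hC⟩ := B.nu_bound hν (hφc.union hψc :
      IsCompact (tsupport φ ∪ tsupport ψ))
    refine csSup_le hnesum ?_
    rintro r ⟨f, h1, h2, rfl⟩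
    have claim : ∀ ε : ℝ, 0 < ε →
        ‖ν f‖ ≤ sSup (Sset B ν φ) + sSup (Sset B ν ψ) + C * ε := by
      intro ε hε
      set d : X → ℝ := fun x => φ x + ψ x + ε with hd
      have hdpos : ∀ x, 0 < d x := fun x => by
        have := hφ0 x; have := hψ0 x; simp only [hd]; linarith
      have hdc : Continuous d := by fun_prop
      have hfd : ∀ x, ‖f x‖ ≤ d x := fun x => (h2 x).trans (by simp [hd]; linarith)
      -- the three multipliers
      have hcont : ∀ g : X → ℝ, Continuous g →
          Continuous (fun x => ((g x / d x : ℝ) : ℂ)) := fun g hg =>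
        Complex.continuous_ofReal.comp (hg.div hdc fun x => ne_of_gt (hdpos x))
      set f₁ : ∀ x, Fib x := fun x => ((φ x / d x : ℝ) : ℂ) • f x with hf₁
      set f₂ : ∀ x, Fib x := fun x => ((ψ x / d x : ℝ) : ℂ) • f x with hf₂
      set f₃ : ∀ x, Fib x := fun x => ((ε / d x : ℝ) : ℂ) • f x with hf₃
      have hm₁ : B.MemGammaC f₁ := B.memGammaC_mulC _ (hcont φ hφ) h1
      have hm₂ : B.MemGammaC f₂ := B.memGammaC_mulC _ (hcont ψ hψ) h1
      have hm₃ : B.MemGammaC f₃ := B.memGammaC_mulC _ (hcont (fun _ => ε)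
        continuous_const) h1
      have keybound : ∀ (c : ℝ) (x : X), 0 ≤ c →
          ‖((c / d x : ℝ) : ℂ) • f x‖ ≤ c := by
        intro c x hc
        rw [norm_smul, Complex.norm_real, Real.norm_eq_abs,
          abs_of_nonneg (div_nonneg hc (le_of_lt (hdpos x)))]
        calc c / d x * ‖f x‖ ≤ c / d x * d x :=
              mul_le_mul_of_nonneg_left (hfd x)
                (div_nonneg hc (le_of_lt (hdpos x)))
          _ = c := div_mul_cancel₀ c (ne_of_gt (hdpos x))
      have hb₁ : ∀ x, ‖f₁ x‖ ≤ φ x := fun x => keybound (φ x) x (hφ0 x)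
      have hb₂ : ∀ x, ‖f₂ x‖ ≤ ψ x := fun x => keybound (ψ x) x (hψ0 x)
      have hb₃ : ∀ x, ‖f₃ x‖ ≤ ε := fun x => keybound ε x (le_of_lt hε)
      have hsupp₃ : ∀ x ∉ tsupport φ ∪ tsupport ψ, f₃ x = 0 := by
        intro x hx
        have hφx : φ x = 0 := image_eq_zero_of_notMem_tsupport
          (fun h => hx (Or.inl h))
        have hψx : ψ x = 0 := image_eq_zero_of_notMem_tsupport
          (fun h => hx (Or.inr h))
        have : f x = 0 := norm_le_zero_iff.mp (by rw [← hφx]; simpa [hψx] using h2 x)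
        simp [hf₃, this]
      have hdecomp : f = fun x => f₁ x + (f₂ x + f₃ x) := by
        funext x
        simp only [hf₁, hf₂, hf₃, ← add_smul]
        have : ((φ x / d x : ℝ) : ℂ) + (((ψ x / d x : ℝ) : ℂ) + ((ε / d x : ℝ) : ℂ))
            = (((φ x + ψ x + ε) / d x : ℝ) : ℂ) := by
          push_cast; ring
        rw [this]
        have : (φ x + ψ x + ε) / d x = 1 := div_self (ne_of_gt (hdpos x))
        rw [this]
        norm_num
      have hν23 : ν (fun x => f₂ x + f₃ x) = ν f₂ + ν f₃ := hν.1 _ _ hm₂ hm₃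
      have hνf : ν f = ν f₁ + (ν f₂ + ν f₃) := by
        rw [hdecomp, hν.1 _ _ hm₁ (B.memGammaC_add hm₂ hm₃), hν23]
      have e₁ : ‖ν f₁‖ ≤ sSup (Sset B ν φ) := le_csSup hbddφ ⟨f₁, hm₁, hb₁, rfl⟩
      have e₂ : ‖ν f₂‖ ≤ sSup (Sset B ν ψ) := le_csSup hbddψ ⟨f₂, hm₂, hb₂, rfl⟩
      have e₃ : ‖ν f₃‖ ≤ C * ε := hC f₃ ε hm₃ hsupp₃ (le_of_lt hε) hb₃
      calc ‖ν f‖ = ‖ν f₁ + (ν f₂ + ν f₃)‖ := by rw [hνf]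
        _ ≤ ‖ν f₁‖ + (‖ν f₂‖ + ‖ν f₃‖) :=
            (norm_add_le _ _).trans (by gcongr; exact norm_add_le _ _)
        _ ≤ sSup (Sset B ν φ) + (sSup (Sset B ν ψ) + C * ε) := by
            gcongr
        _ = sSup (Sset B ν φ) + sSup (Sset B ν ψ) + C * ε := by ring
    refine le_of_forall_pos_le_add fun ε hε => ?_
    set δ : ℝ := ε / (C + 1) with hδdef
    have hδpos : 0 < δ := by positivity
    have hδε : δ * (C + 1) = ε := div_mul_cancel₀ _ (by positivity)
    have := claim δ hδpos
    nlinarith [hδpos.le, hC0]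
  · -- superadditivity
    have key : ∀ r₁ ∈ Sset B ν φ, ∀ r₂ ∈ Sset B ν ψ,
        r₁ + r₂ ≤ sSup (Sset B ν (fun x => φ x + ψ x)) := by
      rintro r₁ ⟨f, hf1, hf2, rfl⟩ r₂ ⟨g, hg1, hg2, rfl⟩
      obtain ⟨c, hc1, hc2⟩ := exists_unimodular (ν f)
      obtain ⟨e, he1, he2⟩ := exists_unimodular (ν g)
      set h : ∀ x, Fib x := fun x => c • f x + e • g x with hh
      have hm : B.MemGammaC h :=
        B.memGammaC_add (B.memGammaC_smul c hf1) (B.memGammaC_smul e hg1)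
      have hb : ∀ x, ‖h x‖ ≤ φ x + ψ x := by
        intro x
        calc ‖h x‖ ≤ ‖c • f x‖ + ‖e • g x‖ := norm_add_le _ _
          _ = ‖f x‖ + ‖g x‖ := by rw [norm_smul, norm_smul, hc1, he1, one_mul, one_mul]
          _ ≤ φ x + ψ x := add_le_add (hf2 x) (hg2 x)
      have hval : ν h = ((‖ν f‖ + ‖ν g‖ : ℝ) : ℂ) := by
        rw [hh, hν.1 _ _ (B.memGammaC_smul c hf1) (B.memGammaC_smul e hg1),
          hν.2.1 _ _ hf1, hν.2.1 _ _ hg1, hc2, he2]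
        push_cast; ring
      have : ‖ν h‖ = ‖ν f‖ + ‖ν g‖ := by
        rw [hval, Complex.norm_real, Real.norm_eq_abs,
          abs_of_nonneg (add_nonneg (norm_nonneg _) (norm_nonneg _))]
      refine le_csSup hbdd ⟨h, hm, hb, ?_⟩
      rw [this]
    have h2 : ∀ r₁ ∈ Sset B ν φ, sSup (Sset B ν ψ) ≤
        sSup (Sset B ν (fun x => φ x + ψ x)) - r₁ := by
      intro r₁ hr₁
      refine csSup_le hneψ fun r₂ hr₂ => ?_
      linarith [key r₁ hr₁ r₂ hr₂]
    have h3 : sSup (Sset B ν φ) ≤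
        sSup (Sset B ν (fun x => φ x + ψ x)) - sSup (Sset B ν ψ) := by
      refine csSup_le hneφ fun r₁ hr₁ => ?_
      linarith [h2 r₁ hr₁]
    linarith

end USCBanachBundle

section ContentPart

variable {G : Type} [TopologicalSpace G] [LocallyCompactSpace G] [T2Space G]

/-- Urysohn-type function for locally compact Hausdorff spaces -/
lemma exists_urysohn_fn {K U : Set G} (hK : IsCompact K) (hU : IsOpen U)
    (hKU : K ⊆ U) : ∃ g : G → ℝ, Continuous g ∧ HasCompactSupport g ∧
      (∀ x, 0 ≤ g x) ∧ (∀ x, g x ≤ 1) ∧ (∀ x ∈ K, g x = 1) ∧ ∀ x ∉ U, g x = 0 := by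
  obtain ⟨f, hf1, hf0, hfc, hf01⟩ := exists_continuous_one_zero_of_isCompact hK
    hU.isClosed_compl (disjoint_compl_right.mono_left hKU)
  exact ⟨f, f.continuous, hfc, fun x => (hf01 x).1, fun x => (hf01 x).2,
    fun x hx => hf1 hx, fun x hx => hf0 hx⟩

namespace USCBanachBundle

variable {Fib : G → Type}
  [∀ x, NormedAddCommGroup (Fib x)] [∀ x, NormedSpace ℂ (Fib x)]
  [∀ x, CompleteSpace (Fib x)]
  (B : USCBanachBundle G Fib) (ν : (∀ x, Fib x) → ℂ)

/-- the set of values of the functional on test functions dominating `1` on `K` -/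
def lamSet (K : Set G) : Set ℝ :=
  { r : ℝ | ∃ φ : G → ℝ, Continuous φ ∧ HasCompactSupport φ ∧ (∀ x, 0 ≤ φ x) ∧
      (∀ x ∈ K, 1 ≤ φ x) ∧ r = sSup (Sset B ν φ) }

/-- the content of a compact set -/
noncomputable def lamF (K : Set G) : ℝ := sInf (lamSet B ν K)

variable {ν}

lemma lamSet_nonempty {K : Set G} (hK : IsCompact K) :
    (lamSet B ν K).Nonempty := by
  obtain ⟨g, h1, h2, h3, h4, h5, h6⟩ :=
    exists_urysohn_fn hK isOpen_univ (Set.subset_univ K)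
  exact ⟨_, g, h1, h2, h3, fun x hx => le_of_eq (h5 x hx).symm, rfl⟩

lemma lamSet_nonneg (hν : B.IsGRM ν) {K : Set G} {r : ℝ} (hr : r ∈ lamSet B ν K) :
    0 ≤ r := by
  obtain ⟨φ, h1, h2, h3, h4, rfl⟩ := hr
  exact B.sSup_Sset_nonneg hν h1 h2 h3

lemma lamSet_bddBelow (hν : B.IsGRM ν) (K : Set G) : BddBelow (lamSet B ν K) :=
  ⟨0, fun r hr => B.lamSet_nonneg hν hr⟩

lemma lamF_nonneg (hν : B.IsGRM ν) {K : Set G} (hK : IsCompact K) :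
    0 ≤ lamF B ν K :=
  le_csInf (B.lamSet_nonempty hK) (fun r hr => B.lamSet_nonneg hν hr)

lemma lamF_le (hν : B.IsGRM ν) {K : Set G} {φ : G → ℝ} (h1 : Continuous φ)
    (h2 : HasCompactSupport φ) (h3 : ∀ x, 0 ≤ φ x) (h4 : ∀ x ∈ K, 1 ≤ φ x) :
    lamF B ν K ≤ sSup (Sset B ν φ) :=
  csInf_le (B.lamSet_bddBelow hν K) ⟨φ, h1, h2, h3, h4, rfl⟩

lemma lamF_mono (hν : B.IsGRM ν) {K₁ K₂ : Set G} (hK₂ : IsCompact K₂)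
    (h : K₁ ⊆ K₂) : lamF B ν K₁ ≤ lamF B ν K₂ := by
  refine csInf_le_csInf (B.lamSet_bddBelow hν K₁) (B.lamSet_nonempty hK₂) ?_
  rintro r ⟨φ, h1, h2, h3, h4, rfl⟩
  exact ⟨φ, h1, h2, h3, fun x hx => h4 x (h hx), rfl⟩

/-- subadditivity of the content -/
lemma lamF_union_le (hν : B.IsGRM ν) {K₁ K₂ : Set G} (hK₁ : IsCompact K₁)
    (hK₂ : IsCompact K₂) :
    lamF B ν (K₁ ∪ K₂) ≤ lamF B ν K₁ + lamF B ν K₂ := by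
  have key : ∀ r₁ ∈ lamSet B ν K₁, ∀ r₂ ∈ lamSet B ν K₂,
      lamF B ν (K₁ ∪ K₂) ≤ r₁ + r₂ := by
    rintro r₁ ⟨φ, h1, h2, h3, h4, rfl⟩ r₂ ⟨ψ, g1, g2, g3, g4, rfl⟩
    have hsum := B.sSup_Sset_add hν h1 h2 h3 g1 g2 g3
    rw [← hsum]
    refine B.lamF_le hν (h1.add g1) (h2.add g2)
      (fun x => add_nonneg (h3 x) (g3 x)) ?_
    rintro x (hx | hx)
    · linarith [h4 x hx, g3 x]
    · linarith [g4 x hx, h3 x]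
  have h2 : ∀ r₁ ∈ lamSet B ν K₁, lamF B ν (K₁ ∪ K₂) - r₁ ≤ lamF B ν K₂ := by
    intro r₁ hr₁
    refine le_csInf (B.lamSet_nonempty hK₂) fun r₂ hr₂ => ?_
    linarith [key r₁ hr₁ r₂ hr₂]
  have h3 : lamF B ν (K₁ ∪ K₂) - lamF B ν K₂ ≤ lamF B ν K₁ := by
    refine le_csInf (B.lamSet_nonempty hK₁) fun r₁ hr₁ => ?_
    linarith [h2 r₁ hr₁]
  linarith

/-- additivity of the content on disjoint compacts -/
lemma lamF_union_disjoint (hν : B.IsGRM ν) {K₁ K₂ : Set G} (hK₁ : IsCompact K₁)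
    (hK₂ : IsCompact K₂) (hd : Disjoint K₁ K₂) :
    lamF B ν K₁ + lamF B ν K₂ ≤ lamF B ν (K₁ ∪ K₂) := by
  refine le_csInf (B.lamSet_nonempty (hK₁.union hK₂)) ?_
  rintro r ⟨ψ, h1, h2, h3, h4, rfl⟩
  obtain ⟨g, hg1, hg2, hg3, hg4, hg5, hg6⟩ := exists_urysohn_fn hK₁
    (hK₂.isClosed.isOpen_compl) (Set.subset_compl_iff_disjoint_right.mpr
      (Set.disjoint_right.mpr fun a ha ha' => Set.disjoint_left.mp hd ha' ha))
  set f₁ : G → ℝ := fun x => ψ x * g x with hf₁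
  set f₂ : G → ℝ := fun x => ψ x * (1 - g x) with hf₂
  have hc₁ : Continuous f₁ := h1.mul hg1
  have hc₂ : Continuous f₂ := h1.mul (continuous_const.sub hg1)
  have hcs₁ : HasCompactSupport f₁ := h2.mul_right
  have hcs₂ : HasCompactSupport f₂ := h2.mul_right
  have hn₁ : ∀ x, 0 ≤ f₁ x := fun x => mul_nonneg (h3 x) (hg3 x)
  have hn₂ : ∀ x, 0 ≤ f₂ x := fun x => mul_nonneg (h3 x) (by linarith [hg4 x])
  have h1K : ∀ x ∈ K₁, 1 ≤ f₁ x := by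
    intro x hx
    rw [hf₁]
    simp only [hg5 x hx, mul_one]
    exact h4 x (Or.inl hx)
  have h2K : ∀ x ∈ K₂, 1 ≤ f₂ x := by
    intro x hx
    have : g x = 0 := hg6 x (fun h => h hx)
    rw [hf₂]
    simp only [this, sub_zero, mul_one]
    exact h4 x (Or.inr hx)
  have hsplit : ψ = fun x => f₁ x + f₂ x := by
    funext x; simp only [hf₁, hf₂]; ring
  calc lamF B ν K₁ + lamF B ν K₂
      ≤ sSup (Sset B ν f₁) + sSup (Sset B ν f₂) :=
        add_le_add (B.lamF_le hν hc₁ hcs₁ hn₁ h1K) (B.lamF_le hν hc₂ hcs₂ hn₂ h2K)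
    _ = sSup (Sset B ν (fun x => f₁ x + f₂ x)) :=
        (B.sSup_Sset_add hν hc₁ hcs₁ hn₁ hc₂ hcs₂ hn₂).symm
    _ = sSup (Sset B ν ψ) := by rw [← hsplit]

/-- the slice bound: if `0 ≤ ψ ≤ M` is supported in the compact `K` then
`Λ ψ ≤ M λ(K)`. -/
lemma sSup_le_mul_lamF (hν : B.IsGRM ν) {ψ : G → ℝ} {M : ℝ} {K : Set G}
    (h1 : Continuous ψ) (h2 : HasCompactSupport ψ) (h3 : ∀ x, 0 ≤ ψ x)
    (hM : 0 < M) (hψM : ∀ x, ψ x ≤ M) (hK : IsCompact K)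
    (hsupp : ∀ x ∉ K, ψ x = 0) :
    sSup (Sset B ν ψ) ≤ M * lamF B ν K := by
  rw [mul_comm, ← div_le_iff₀ hM]
  refine le_csInf (B.lamSet_nonempty hK) ?_
  rintro r ⟨φ, g1, g2, g3, g4, rfl⟩
  rw [div_le_iff₀ hM, mul_comm]
  have hmono : ∀ x, ψ x ≤ M * φ x := by
    intro x
    by_cases hx : x ∈ K
    · calc ψ x ≤ M := hψM x
        _ = M * 1 := (mul_one M).symm
        _ ≤ M * φ x := mul_le_mul_of_nonneg_left (g4 x hx) (le_of_lt hM)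
    · rw [hsupp x hx]
      exact mul_nonneg (le_of_lt hM) (g3 x)
  calc sSup (Sset B ν ψ)
      ≤ sSup (Sset B ν (fun x => M * φ x)) :=
        B.sSup_Sset_mono hν (continuous_const.mul g1) (g2.mul_left) h3 hmono
    _ = M * sSup (Sset B ν φ) := B.sSup_Sset_smul hν g1 g2 g3 (le_of_lt hM)

end USCBanachBundle

end ContentPart

section MeasurePart

namespace USCBanachBundle

variable {G : Type} [TopologicalSpace G] [LocallyCompactSpace G] [T2Space G]
  {Fib : G → Type}
  [∀ x, NormedAddCommGroup (Fib x)] [∀ x, NormedSpace ℂ (Fib x)]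
  [∀ x, CompleteSpace (Fib x)]
  (B : USCBanachBundle G Fib) {ν : (∀ x, Fib x) → ℂ}

/-- The content induced by a generalized Radon measure. -/
noncomputable def nuContent (hν : B.IsGRM ν) : MeasureTheory.Content G where
  toFun K := ⟨lamF B ν K, B.lamF_nonneg hν K.2⟩
  mono' K₁ K₂ h := by
    show lamF B ν K₁ ≤ lamF B ν K₂
    exact B.lamF_mono hν K₂.2 h
  sup_disjoint' K₁ K₂ hd _ _ := by
    apply NNReal.coe_injective
    show lamF B ν _ = lamF B ν _ + lamF B ν _
    apply le_antisymm
    · show lamF B ν ((K₁ ⊔ K₂ : TopologicalSpace.Compacts G) : Set G) ≤ _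
      rw [TopologicalSpace.Compacts.coe_sup]
      exact B.lamF_union_le hν K₁.2 K₂.2
    · show _ ≤ lamF B ν ((K₁ ⊔ K₂ : TopologicalSpace.Compacts G) : Set G)
      rw [TopologicalSpace.Compacts.coe_sup]
      exact B.lamF_union_disjoint hν K₁.2 K₂.2 hd
  sup_le' K₁ K₂ := by
    show lamF B ν ((K₁ ⊔ K₂ : TopologicalSpace.Compacts G) : Set G) ≤ _
    rw [TopologicalSpace.Compacts.coe_sup]
    exact B.lamF_union_le hν K₁.2 K₂.2

variable [MeasurableSpace G] [BorelSpace G]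

lemma nuContent_measure_compact_lt_top (hν : B.IsGRM ν) {K : Set G}
    (hK : IsCompact K) : (B.nuContent hν).measure K < ⊤ := by
  rw [MeasureTheory.Content.measure_apply _ hK.isClosed.measurableSet]
  exact (B.nuContent hν).outerMeasure_lt_top_of_isCompact hK

lemma ofReal_lamF_le_measure (hν : B.IsGRM ν) {K U : Set G} (hK : IsCompact K)
    (hU : IsOpen U) (hKU : K ⊆ U) :
    ENNReal.ofReal (lamF B ν K) ≤ (B.nuContent hν).measure U := by
  rw [MeasureTheory.Content.measure_apply _ hU.measurableSet,
    MeasureTheory.Content.outerMeasure_of_isOpen _ _ hU]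
  have h := (B.nuContent hν).le_innerContent ⟨K, hK⟩ ⟨U, hU⟩ hKU
  refine le_trans (le_of_eq ?_) h
  rw [ENNReal.ofReal_eq_coe_nnreal (B.lamF_nonneg hν hK)]
  rfl

lemma measure_le_ofReal (hν : B.IsGRM ν) {U : Set G} (hU : IsOpen U) {c : ℝ}
    (hc : 0 ≤ c) (h : ∀ K : Set G, IsCompact K → K ⊆ U → lamF B ν K ≤ c) :
    (B.nuContent hν).measure U ≤ ENNReal.ofReal c := by
  rw [MeasureTheory.Content.measure_apply _ hU.measurableSet,
    MeasureTheory.Content.outerMeasure_of_isOpen _ _ hU]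
  refine iSup₂_le fun K hK => ?_
  rw [ENNReal.ofReal_eq_coe_nnreal hc]
  exact ENNReal.coe_le_coe.mpr (h K K.2 hK)

end USCBanachBundle

/-- summing the slice functions -/
lemma slice_sum {δ : ℝ} (hδ : 0 < δ) {t : ℝ} (ht : 0 ≤ t) (N : ℕ) :
    ∑ i ∈ Finset.range N, min δ (max (t - i * δ) 0) = min t (N * δ) := by
  induction N with
  | zero => simp [min_eq_right ht]
  | succ n ih =>
    rw [Finset.sum_range_succ, ih]
    push_cast
    rcases le_total t (n * δ) with h | h
    · rw [min_eq_left h, max_eq_right (by linarith), min_eq_right hδ.le,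
        min_eq_left (by nlinarith)]
      ring
    · rw [min_eq_right h, max_eq_left (by linarith)]
      rcases le_total δ (t - n * δ) with h' | h'
      · rw [min_eq_left h', min_eq_right (by nlinarith)]
        ring
      · rw [min_eq_right h', min_eq_left (by nlinarith)]
        ring

end MeasurePart

namespace USCBanachBundle

variable {G : Type} [TopologicalSpace G] [LocallyCompactSpace G] [T2Space G]
  [MeasurableSpace G] [BorelSpace G]
  {Fib : G → Type}
  [∀ x, NormedAddCommGroup (Fib x)] [∀ x, NormedSpace ℂ (Fib x)]
  [∀ x, CompleteSpace (Fib x)]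
  (B : USCBanachBundle G Fib) {ν : (∀ x, Fib x) → ℂ}

lemma sSup_Sset_zero_fn (hν : B.IsGRM ν) :
    sSup (Sset B ν (fun _ => (0:ℝ))) = 0 := by
  have h := B.sSup_Sset_smul hν (φ := fun _ => (0:ℝ)) continuous_const
    HasCompactSupport.zero (fun _ => le_refl 0) (le_refl (0:ℝ))
  simpa using h

lemma integral_eq_sSup (hν : B.IsGRM ν) {φ : G → ℝ} (hφ : Continuous φ)
    (hφc : HasCompactSupport φ) (hφ0 : ∀ x, 0 ≤ φ x) :
    ∫ x, φ x ∂(B.nuContent hν).measure = sSup (Sset B ν φ) := by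
  set μ := (B.nuContent hν).measure with hμdef
  have hfinK : ∀ {K : Set G}, IsCompact K → μ K < ⊤ := fun hK =>
    B.nuContent_measure_compact_lt_top hν hK
  haveI : MeasureTheory.IsFiniteMeasureOnCompacts μ := ⟨fun _ hK => hfinK hK⟩
  have hint : ∀ ψ : G → ℝ, Continuous ψ → HasCompactSupport ψ →
      MeasureTheory.Integrable ψ μ :=
    fun ψ hc hcs => hc.integrable_of_hasCompactSupport hcs
  obtain ⟨M0, hM0⟩ := hφ.bddAbove_range_of_hasCompactSupport hφc
  set M : ℝ := max M0 0 with hMdef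
  have hφM : ∀ x, φ x ≤ M := fun x => le_max_of_le_left (hM0 ⟨x, rfl⟩)
  set K0 : Set G := tsupport φ with hK0def
  have hK0 : IsCompact K0 := hφc
  set U0 : Set G := {x | 0 < φ x} with hU0def
  have hU0open : IsOpen U0 := isOpen_lt continuous_const hφ
  have hU0sub : U0 ⊆ K0 := fun x hx =>
    subset_closure (fun h : φ x = 0 => absurd h (ne_of_gt hx))
  have hμU0 : μ U0 < ⊤ := lt_of_le_of_lt (measure_mono hU0sub) (hfinK hK0)
  set Λφ := sSup (Sset B ν φ) with hΛφdef
  set A : ℝ := lamF B ν K0 + (μ U0).toReal + 1 with hAdef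
  have hlamK0 : 0 ≤ lamF B ν K0 := B.lamF_nonneg hν hK0
  have hA : 0 < A := by
    have := ENNReal.toReal_nonneg (a := μ U0)
    rw [hAdef]; linarith
  -- the families of compact / open sets
  set Kt : ℝ → Set G := fun t => {x | t ≤ φ x} with hKtdef
  set Ut : ℝ → Set G := fun t => {x | t < φ x} with hUtdef
  have hKtc : ∀ t : ℝ, 0 < t → IsCompact (Kt t) := by
    intro t ht
    refine hK0.of_isClosed_subset (isClosed_le continuous_const hφ) ?_
    intro x hx
    exact subset_closure (fun h : φ x = 0 => by
      rw [hKtdef] at hx; simp only [Set.mem_setOf_eq] at hx; linarith)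
  have hUto : ∀ t : ℝ, IsOpen (Ut t) := fun t => isOpen_lt continuous_const hφ
  have hUtK : ∀ t : ℝ, 0 ≤ t → Ut t ⊆ K0 := fun t ht x hx =>
    subset_closure (fun h : φ x = 0 => by
      rw [hUtdef] at hx; simp only [Set.mem_setOf_eq] at hx; linarith)
  have hμUt : ∀ t : ℝ, 0 ≤ t → μ (Ut t) < ⊤ := fun t ht =>
    lt_of_le_of_lt (measure_mono (hUtK t ht)) (hfinK hK0)
  have main : ∀ δ : ℝ, 0 < δ →
      Λφ ≤ (∫ x, φ x ∂μ) + δ * A ∧ (∫ x, φ x ∂μ) ≤ Λφ + δ * A := by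
    intro δ hδ
    -- the slices
    set sl : ℕ → G → ℝ := fun i x => min δ (max (φ x - i * δ) 0) with hsl
    have slc : ∀ i, Continuous (sl i) := fun i =>
      continuous_const.min ((hφ.sub continuous_const).max continuous_const)
    have sl0 : ∀ i x, 0 ≤ sl i x := fun i x => le_min hδ.le (le_max_right _ _)
    have slδ : ∀ i x, sl i x ≤ δ := fun i x => min_le_left _ _
    have slzero : ∀ (i : ℕ) (x), φ x ≤ i * δ → sl i x = 0 := by
      intro i x h
      rw [hsl]
      simp only
      rw [max_eq_right (by linarith), min_eq_right hδ.le]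
    have sleq : ∀ (i : ℕ) (x), ((i : ℝ) + 1) * δ ≤ φ x → sl i x = δ := by
      intro i x h
      rw [hsl]
      simp only
      rw [max_eq_left (by nlinarith), min_eq_left (by nlinarith)]
    have slsupp : ∀ (i : ℕ) (x), x ∉ K0 → sl i x = 0 := by
      intro i x hx
      refine slzero i x ?_
      rw [image_eq_zero_of_notMem_tsupport hx]
      positivity
    have slcs : ∀ i, HasCompactSupport (sl i) :=
      fun i => HasCompactSupport.intro hK0 (slsupp i)
    have slint : ∀ i, MeasureTheory.Integrable (sl i) μ :=
      fun i => hint _ (slc i) (slcs i)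
    have slΛ : ∀ i, 0 ≤ sSup (Sset B ν (sl i)) :=
      fun i => B.sSup_Sset_nonneg hν (slc i) (slcs i) (sl0 i)
    have slI : ∀ i, 0 ≤ ∫ x, sl i x ∂μ :=
      fun i => MeasureTheory.integral_nonneg (sl0 i)
    -- choice of N
    obtain ⟨N, hN⟩ := exists_nat_gt (M / δ)
    have hNM : ∀ x, φ x ≤ N * δ := by
      intro x
      have h1 : M < N * δ := (div_lt_iff₀ hδ).mp hN
      linarith [hφM x]
    have hsum : ∀ m : ℕ, N ≤ m → ∀ x, ∑ i ∈ Finset.range m, sl i x = φ x := by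
      intro m hm x
      rw [hsl]
      simp only
      rw [slice_sum hδ (hφ0 x) m]
      refine min_eq_left ?_
      have : (N : ℝ) * δ ≤ (m : ℝ) * δ :=
        mul_le_mul_of_nonneg_right (by exact_mod_cast hm) hδ.le
      linarith [hNM x]
    -- Λ is additive over the slices
    have Λadd : ∀ m : ℕ,
        sSup (Sset B ν (fun x => ∑ i ∈ Finset.range m, sl i x)) =
          ∑ i ∈ Finset.range m, sSup (Sset B ν (sl i)) := by
      intro m
      induction m with
      | zero => simpa using B.sSup_Sset_zero_fn hν
      | succ n ih =>
        have hPc : Continuous (fun x => ∑ i ∈ Finset.range n, sl i x) :=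
          continuous_finset_sum _ (fun i _ => slc i)
        have hPcs : HasCompactSupport (fun x => ∑ i ∈ Finset.range n, sl i x) :=
          HasCompactSupport.intro hK0 (fun x hx =>
            Finset.sum_eq_zero fun i _ => slsupp i x hx)
        have hP0 : ∀ x, 0 ≤ ∑ i ∈ Finset.range n, sl i x :=
          fun x => Finset.sum_nonneg fun i _ => sl0 i x
        have step := B.sSup_Sset_add hν hPc hPcs hP0 (slc n) (slcs n) (sl0 n)
        have hfn : (fun x => ∑ i ∈ Finset.range (n+1), sl i x) =
            (fun x => (∑ i ∈ Finset.range n, sl i x) + sl n x) := by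
          funext x
          rw [Finset.sum_range_succ]
        rw [hfn, step, ih, Finset.sum_range_succ]
    have Λφ_eq : ∀ m : ℕ, N ≤ m →
        ∑ i ∈ Finset.range m, sSup (Sset B ν (sl i)) = Λφ := by
      intro m hm
      have hfn : (fun x => ∑ i ∈ Finset.range m, sl i x) = φ :=
        funext (hsum m hm)
      rw [← Λadd m, hfn]
    constructor
    · -- claim 1 : Λφ ≤ ∫φ + δ A
      have e0 : sSup (Sset B ν (sl 0)) ≤ δ * lamF B ν K0 :=
        B.sSup_le_mul_lamF hν (slc 0) (slcs 0) (sl0 0) hδ (slδ 0) hK0 (slsupp 0)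
      have e1 : sSup (Sset B ν (sl 1)) ≤ δ * (μ U0).toReal := by
        have hKδ : IsCompact (Kt δ) := hKtc δ hδ
        have h1 : sSup (Sset B ν (sl 1)) ≤ δ * lamF B ν (Kt δ) := by
          refine B.sSup_le_mul_lamF hν (slc 1) (slcs 1) (sl0 1) hδ (slδ 1) hKδ ?_
          intro x hx
          refine slzero 1 x ?_
          rw [hKtdef] at hx
          simp only [Set.mem_setOf_eq, not_le] at hx
          push_cast
          linarith
        have h2 : lamF B ν (Kt δ) ≤ (μ U0).toReal := by
          have h3 := B.ofReal_lamF_le_measure hν hKδ hU0open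
            (fun x hx => by
              rw [hKtdef] at hx; rw [hU0def]
              simp only [Set.mem_setOf_eq] at hx ⊢
              linarith)
          calc lamF B ν (Kt δ) = (ENNReal.ofReal (lamF B ν (Kt δ))).toReal :=
                (ENNReal.toReal_ofReal (B.lamF_nonneg hν hKδ)).symm
            _ ≤ (μ U0).toReal := ENNReal.toReal_mono (ne_of_lt hμU0) h3
        calc sSup (Sset B ν (sl 1)) ≤ δ * lamF B ν (Kt δ) := h1
          _ ≤ δ * (μ U0).toReal := by
              exact mul_le_mul_of_nonneg_left h2 hδ.le
      have e2 : ∀ i : ℕ, sSup (Sset B ν (sl (i + 2))) ≤ ∫ x, sl i x ∂μ := by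
        intro i
        have hc2 : (0:ℝ) < ((i : ℝ) + 2) * δ := by positivity
        have hKi2 : IsCompact (Kt (((i:ℝ) + 2) * δ)) := hKtc _ hc2
        have hKi1 : IsCompact (Kt (((i:ℝ) + 1) * δ)) := hKtc _ (by positivity)
        have h1 : sSup (Sset B ν (sl (i + 2))) ≤ δ * lamF B ν (Kt (((i:ℝ) + 2) * δ)) := by
          refine B.sSup_le_mul_lamF hν (slc _) (slcs _) (sl0 _) hδ (slδ _) hKi2 ?_
          intro x hx
          refine slzero (i + 2) x ?_
          rw [hKtdef] at hx
          simp only [Set.mem_setOf_eq, not_le] at hx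
          push_cast
          linarith
        have h2 : lamF B ν (Kt (((i:ℝ) + 2) * δ)) ≤ (μ (Kt (((i:ℝ) + 1) * δ))).toReal := by
          have h3 := B.ofReal_lamF_le_measure hν hKi2 (hUto (((i:ℝ) + 1) * δ))
            (fun x hx => by
              rw [hKtdef] at hx; rw [hUtdef]
              simp only [Set.mem_setOf_eq] at hx ⊢
              nlinarith)
          have h4 : μ (Ut (((i:ℝ) + 1) * δ)) ≤ μ (Kt (((i:ℝ) + 1) * δ)) := by
            refine measure_mono ?_
            intro x hx
            rw [hUtdef] at hx; rw [hKtdef]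
            simp only [Set.mem_setOf_eq] at hx ⊢
            linarith
          calc lamF B ν (Kt (((i:ℝ) + 2) * δ))
              = (ENNReal.ofReal (lamF B ν (Kt (((i:ℝ) + 2) * δ)))).toReal :=
                (ENNReal.toReal_ofReal (B.lamF_nonneg hν hKi2)).symm
            _ ≤ (μ (Kt (((i:ℝ) + 1) * δ))).toReal :=
                ENNReal.toReal_mono (ne_of_lt (hfinK hKi1)) (h3.trans h4)
        have h5 : δ * (μ (Kt (((i:ℝ) + 1) * δ))).toReal ≤ ∫ x, sl i x ∂μ := by
          have hmeas : MeasurableSet (Kt (((i:ℝ) + 1) * δ)) :=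
            (isClosed_le continuous_const hφ).measurableSet
          have hI1 : ∫ x in Kt (((i:ℝ) + 1) * δ), sl i x ∂μ ≤ ∫ x, sl i x ∂μ :=
            MeasureTheory.setIntegral_le_integral (slint i)
              (Filter.Eventually.of_forall (sl0 i))
          have hI2 : δ * (μ (Kt (((i:ℝ) + 1) * δ))).toReal
              ≤ ∫ x in Kt (((i:ℝ) + 1) * δ), sl i x ∂μ := by
            have := MeasureTheory.setIntegral_mono_on
              (MeasureTheory.integrableOn_const (hfinK hKi1).ne)
              ((slint i).integrableOn) hmeas
              (fun x hx => le_of_eq (sleq i x (by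
                rw [hKtdef] at hx; simp only [Set.mem_setOf_eq] at hx
                linarith)).symm)
            rw [MeasureTheory.setIntegral_const] at this
            refine le_trans (le_of_eq (mul_comm _ _)) ?_
            simpa [measureReal_def] using this
          exact hI2.trans hI1
        calc sSup (Sset B ν (sl (i + 2)))
            ≤ δ * lamF B ν (Kt (((i:ℝ) + 2) * δ)) := h1
          _ ≤ δ * (μ (Kt (((i:ℝ) + 1) * δ))).toReal :=
              mul_le_mul_of_nonneg_left h2 hδ.le
          _ ≤ ∫ x, sl i x ∂μ := h5
      -- assemble claim 1
      have hsplit : ∑ i ∈ Finset.range (N + 2), sSup (Sset B ν (sl i)) =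
          (∑ i ∈ Finset.range N, sSup (Sset B ν (sl (i + 2)))) +
            sSup (Sset B ν (sl 1)) + sSup (Sset B ν (sl 0)) := by
        rw [Finset.sum_range_succ' _ (N + 1), Finset.sum_range_succ' _ N]
      have hIsum : ∑ i ∈ Finset.range N, ∫ x, sl i x ∂μ ≤ ∫ x, φ x ∂μ := by
        have h6 : ∑ i ∈ Finset.range N, ∫ x, sl i x ∂μ =
            ∫ x, (∑ i ∈ Finset.range N, sl i x) ∂μ :=
          (MeasureTheory.integral_finset_sum _ (fun i _ => slint i)).symm
        rw [h6]
        refine le_of_eq ?_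
        congr 1
        funext x
        exact hsum N (le_refl N) x
      calc Λφ = ∑ i ∈ Finset.range (N + 2), sSup (Sset B ν (sl i)) :=
            (Λφ_eq (N + 2) (by omega)).symm
        _ = (∑ i ∈ Finset.range N, sSup (Sset B ν (sl (i + 2)))) +
            sSup (Sset B ν (sl 1)) + sSup (Sset B ν (sl 0)) := hsplit
        _ ≤ (∑ i ∈ Finset.range N, ∫ x, sl i x ∂μ) +
            δ * (μ U0).toReal + δ * lamF B ν K0 :=
            add_le_add (add_le_add (Finset.sum_le_sum fun i _ => e2 i) e1) e0
        _ ≤ (∫ x, φ x ∂μ) + δ * (μ U0).toReal + δ * lamF B ν K0 := by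
            gcongr
        _ ≤ (∫ x, φ x ∂μ) + δ * A := by
            rw [hAdef]
            nlinarith [ENNReal.toReal_nonneg (a := μ U0)]
    · -- claim 2 : ∫φ ≤ Λφ + δ A
      have f1 : ∀ i : ℕ, ∫ x, sl i x ∂μ ≤ δ * (μ (Ut ((i:ℝ) * δ))).toReal := by
        intro i
        have hUi : IsOpen (Ut ((i:ℝ) * δ)) := hUto _
        have hμUi : μ (Ut ((i:ℝ) * δ)) < ⊤ :=
          hμUt _ (mul_nonneg (Nat.cast_nonneg i) hδ.le)
        have hzero : ∀ x ∉ Ut ((i:ℝ) * δ), sl i x = 0 := by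
          intro x hx
          rw [hUtdef] at hx
          simp only [Set.mem_setOf_eq, not_lt] at hx
          exact slzero i x hx
        rw [← MeasureTheory.setIntegral_eq_integral_of_forall_compl_eq_zero hzero]
        have := MeasureTheory.setIntegral_mono_on ((slint i).integrableOn)
          (MeasureTheory.integrableOn_const hμUi.ne)
          hUi.measurableSet (fun x _ => slδ i x)
        rw [MeasureTheory.setIntegral_const] at this
        refine le_trans ?_ (le_of_eq (mul_comm _ _))
        simpa [measureReal_def] using this
      have f2 : ∀ i : ℕ, δ * (μ (Ut (((i:ℝ) + 1) * δ))).toReal ≤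
          sSup (Sset B ν (sl i)) := by
        intro i
        have hUi : IsOpen (Ut (((i:ℝ) + 1) * δ)) := hUto _
        have key : μ (Ut (((i:ℝ) + 1) * δ)) ≤
            ENNReal.ofReal (sSup (Sset B ν (sl i)) / δ) := by
          refine B.measure_le_ofReal hν hUi (div_nonneg (slΛ i) hδ.le) ?_
          intro K hK hKU
          obtain ⟨g, hg1, hg2, hg3, hg4, hg5, hg6⟩ := exists_urysohn_fn hK hUi hKU
          have hstep : lamF B ν K ≤ sSup (Sset B ν g) :=
            B.lamF_le hν hg1 hg2 hg3 (fun x hx => le_of_eq (hg5 x hx).symm)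
          rw [le_div_iff₀ hδ, mul_comm]
          have hδg : sSup (Sset B ν (fun x => δ * g x)) =
              δ * sSup (Sset B ν g) := B.sSup_Sset_smul hν hg1 hg2 hg3 hδ.le
          have hmono : sSup (Sset B ν (fun x => δ * g x)) ≤
              sSup (Sset B ν (sl i)) := by
            refine B.sSup_Sset_mono hν (slc i) (slcs i)
              (fun x => mul_nonneg hδ.le (hg3 x)) ?_
            intro x
            by_cases hx : x ∈ Ut (((i:ℝ) + 1) * δ)
            · rw [hUtdef] at hx
              simp only [Set.mem_setOf_eq] at hx
              rw [sleq i x (le_of_lt hx)]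
              calc δ * g x ≤ δ * 1 := mul_le_mul_of_nonneg_left (hg4 x) hδ.le
                _ = δ := mul_one δ
            · rw [hg6 x hx, mul_zero]
              exact sl0 i x
          calc δ * lamF B ν K ≤ δ * sSup (Sset B ν g) :=
                mul_le_mul_of_nonneg_left hstep hδ.le
            _ = sSup (Sset B ν (fun x => δ * g x)) := hδg.symm
            _ ≤ sSup (Sset B ν (sl i)) := hmono
        have := ENNReal.toReal_le_of_le_ofReal
          (div_nonneg (slΛ i) hδ.le) key
        calc δ * (μ (Ut (((i:ℝ) + 1) * δ))).toReal
            ≤ δ * (sSup (Sset B ν (sl i)) / δ) :=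
              mul_le_mul_of_nonneg_left this hδ.le
          _ = sSup (Sset B ν (sl i)) := by
              field_simp
      -- assemble claim 2
      have hIeq : ∫ x, φ x ∂μ = ∑ i ∈ Finset.range (N + 1), ∫ x, sl i x ∂μ := by
        rw [← MeasureTheory.integral_finset_sum _ (fun i _ => slint i)]
        congr 1
        funext x
        exact (hsum (N + 1) (by omega) x).symm
      have hshift : ∑ i ∈ Finset.range (N + 1), δ * (μ (Ut ((i:ℝ) * δ))).toReal =
          (∑ i ∈ Finset.range N, δ * (μ (Ut (((i:ℝ) + 1) * δ))).toReal) +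
            δ * (μ U0).toReal := by
        rw [Finset.sum_range_succ'
          (fun i : ℕ => δ * (μ (Ut ((i:ℝ) * δ))).toReal) N]
        congr 1
        · refine Finset.sum_congr rfl fun i _ => ?_
          norm_num
        · norm_num
          exact Or.inl rfl
      calc ∫ x, φ x ∂μ = ∑ i ∈ Finset.range (N + 1), ∫ x, sl i x ∂μ := hIeq
        _ ≤ ∑ i ∈ Finset.range (N + 1), δ * (μ (Ut ((i:ℝ) * δ))).toReal :=
            Finset.sum_le_sum fun i _ => f1 i
        _ = (∑ i ∈ Finset.range N, δ * (μ (Ut (((i:ℝ) + 1) * δ))).toReal) +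
            δ * (μ U0).toReal := hshift
        _ ≤ (∑ i ∈ Finset.range N, sSup (Sset B ν (sl i))) + δ * (μ U0).toReal :=
            add_le_add_left (Finset.sum_le_sum fun i _ => f2 i) _
        _ ≤ (∑ i ∈ Finset.range (N + 1), sSup (Sset B ν (sl i))) +
            δ * (μ U0).toReal := by
            refine add_le_add_left ?_ _
            refine Finset.sum_le_sum_of_subset_of_nonneg
              (Finset.range_subset_range.mpr (Nat.le_succ N)) (fun i _ _ => slΛ i)
        _ = Λφ + δ * (μ U0).toReal := by rw [Λφ_eq (N + 1) (by omega)]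
        _ ≤ Λφ + δ * A := by
            rw [hAdef]
            nlinarith [ENNReal.toReal_nonneg (a := μ U0)]
  -- conclude
  have hAne : A ≠ 0 := ne_of_gt hA
  apply le_antisymm
  · refine le_of_forall_pos_le_add fun ε hε => ?_
    have h := (main (ε / A) (by positivity)).2
    rw [div_mul_cancel₀ _ hAne] at h
    exact h
  · refine le_of_forall_pos_le_add fun ε hε => ?_
    have h := (main (ε / A) (by positivity)).1
    rw [div_mul_cancel₀ _ hAne] at h
    exact h

end USCBanachBundle

/-- Lemma 3.1 of the paper: every generalized Radon measure `ν` on an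
upper semicontinuous Banach bundle over a second countable locally compact Hausdorff
space has a total variation: a Radon measure `μ` on `G` such that for every
nonnegative `φ ∈ C_c(G)`,
`∫ φ dμ = sup { |ν f| : f ∈ Γ_c(G;𝔅), ‖f x‖ ≤ φ x for all x }`. -/
theorem USCBanachBundle.exists_total_variation
    {G : Type} [TopologicalSpace G] [SecondCountableTopology G]
    [LocallyCompactSpace G] [T2Space G]
    [MeasurableSpace G] [BorelSpace G]
    {Fib : G → Type}
    [∀ x, NormedAddCommGroup (Fib x)] [∀ x, NormedSpace ℂ (Fib x)]
    [∀ x, CompleteSpace (Fib x)]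
    (B : USCBanachBundle G Fib)
    (ν : (∀ x, Fib x) → ℂ) (hν : B.IsGRM ν) :
    ∃ μ : Measure G, (∀ K : Set G, IsCompact K → μ K < ⊤) ∧
      ∀ φ : G → ℝ, Continuous φ → HasCompactSupport φ → (∀ x, 0 ≤ φ x) →
        ∫ x, φ x ∂μ =
          sSup { r : ℝ | ∃ f, B.MemGammaC f ∧ (∀ x, ‖f x‖ ≤ φ x) ∧ r = ‖ν f‖ } := by
  refine ⟨(B.nuContent hν).measure,
    fun K hK => B.nuContent_measure_compact_lt_top hν hK, ?_⟩
  intro φ hφ hφc hφ0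
  exact B.integral_eq_sSup hν hφ hφc hφ0
end

section
/- Let p : 𝔅 → G be an upper semicontinuous Banach bundle over a second countable locally compact Hausdorff space G and let σ be a generalized Radon measure on 𝔅 which is represented as σ(f) = ∫_G ε_x(f(x)) d|σ|(x) for all f ∈ Γ_c(G;𝔅), where each ε_x ∈ B(x)* has ‖ε_x‖ ≤ 1 and x ↦ ε_x(f(x)) is Borel for every f ∈ Γ_c(G;𝔅). Then: (1) for every f ∈ Σ_c(G;𝔅), the function x ↦ ε_x(f(x)) is a bounded Borel function vanishing off a compact set, so σ extends to a linear functional on Σ_c(G;𝔅) by the same integral formula; and (2) if (f_n) ⊆ Σ_c(G;𝔅) is a uniformly bounded sequence whose supports are contained in a fixed compact set and which converges pointwise to f ∈ Σ_c(G;𝔅), then σ(f_n) → σ(f). -/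
open MeasureTheory Filter Topology Set

/-- Pointwise convergence in the total space, within a single fibre, implies norm
convergence in the fibre. -/
lemma USCBanachBundle.fiber_tendsto {X : Type} [TopologicalSpace X] {Fib : X → Type}
    [∀ x, NormedAddCommGroup (Fib x)] [∀ x, NormedSpace ℂ (Fib x)]
    [∀ x, CompleteSpace (Fib x)]
    (B : USCBanachBundle X Fib) {x : X} {a : ℕ → Fib x} {v : Fib x}
    (h : Filter.Tendsto (fun n => (⟨x, a n⟩ : (y : X) × Fib y)) Filter.atTop
      (@nhds _ B.topTotal (⟨x, v⟩ : (y : X) × Fib y))) :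
    Filter.Tendsto a Filter.atTop (nhds v) := by
  letI := B.topTotal
  have hpair : Tendsto
      (fun n => ((⟨x, a n⟩ : (y : X) × Fib y), (⟨x, -v⟩ : (y : X) × Fib y)))
      atTop (𝓝 ((⟨x, v⟩ : (y : X) × Fib y), (⟨x, -v⟩ : (y : X) × Fib y))) :=
    h.prodMk_nhds tendsto_const_nhds
  have hsub : Tendsto
      (fun n => (⟨((⟨x, a n⟩ : (y : X) × Fib y), (⟨x, -v⟩ : (y : X) × Fib y)), rfl⟩ :
        { q : ((y : X) × Fib y) × ((y : X) × Fib y) // q.1.1 = q.2.1 }))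
      atTop (𝓝 (⟨((⟨x, v⟩ : (y : X) × Fib y), (⟨x, -v⟩ : (y : X) × Fib y)), rfl⟩ :
        { q : ((y : X) × Fib y) × ((y : X) × Fib y) // q.1.1 = q.2.1 })) := by
    rw [tendsto_subtype_rng]
    exact hpair
  have hadd := (B.continuous_add.tendsto _).comp hsub
  have hadd' : Tendsto (fun n => (⟨x, a n + -v⟩ : (y : X) × Fib y)) atTop
      (𝓝 (⟨x, v + -v⟩ : (y : X) × Fib y)) := hadd
  rw [add_neg_cancel] at hadd'
  rw [Metric.tendsto_atTop]
  intro r hr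
  have h0 : (⟨x, (0 : Fib x)⟩ : (y : X) × Fib y) ∈
      { b : (y : X) × Fib y | ‖b.2‖ < r } := by
    simpa using hr
  have hev := hadd' ((B.isOpen_norm_lt r).mem_nhds h0)
  obtain ⟨N, hN⟩ := Filter.eventually_atTop.mp hev
  exact ⟨N, fun n hn => by
    rw [dist_eq_norm, sub_eq_add_neg]; exact hN n hn⟩

/-- Lemma 3.9 of the paper: if the generalized Radon measure `σ` is
represented as `σ f = ∫ ε_x (f x) d|σ|(x)` with `‖ε_x‖ ≤ 1`, then (1) for every
`f ∈ Σ_c(G;𝔅)` the function `x ↦ ε_x (f x)` is a bounded Borel function vanishing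
off a compact set (so `σ` extends to `Σ_c(G;𝔅)` by the same formula), and (2) the
extension is sequentially continuous for uniformly bounded, uniformly compactly
supported, pointwise convergent sequences in `Σ_c(G;𝔅)`. -/
theorem USCBanachBundle.grm_extension_to_sigma_c
    {G : Type} [TopologicalSpace G] [SecondCountableTopology G]
    [LocallyCompactSpace G] [T2Space G]
    [MeasurableSpace G] [BorelSpace G]
    {Fib : G → Type}
    [∀ x, NormedAddCommGroup (Fib x)] [∀ x, NormedSpace ℂ (Fib x)]
    [∀ x, CompleteSpace (Fib x)]
    (B : USCBanachBundle G Fib)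
    (σ : (∀ x, Fib x) → ℂ) (hσ : B.IsGRM σ)
    (μσ : Measure G) (hμσ : B.IsTotalVariation σ μσ)
    (ε : (x : G) → (Fib x →L[ℂ] ℂ)) (hε : ∀ x, ‖ε x‖ ≤ 1)
    (hmeas : ∀ f, B.MemGammaC f → Measurable fun x => ε x (f x))
    (hrep : ∀ f, B.MemGammaC f → σ f = ∫ x, ε x (f x) ∂μσ) :
    (∀ f, B.MemSigmaC f →
      Measurable (fun x => ε x (f x)) ∧
      (∃ M : ℝ, ∀ x, ‖ε x (f x)‖ ≤ M) ∧
      (∃ K : Set G, IsCompact K ∧ ∀ x ∉ K, ε x (f x) = 0)) ∧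
    (∀ (F : ℕ → ∀ x, Fib x) (f : ∀ x, Fib x) (K : Set G) (M : ℝ),
      (∀ n, B.MemSigmaC (F n)) → B.MemSigmaC f →
      IsCompact K → (∀ n, ∀ x ∉ K, F n x = 0) →
      (∀ n x, ‖F n x‖ ≤ M) →
      (∀ x, Filter.Tendsto (fun n => (⟨x, F n x⟩ : (x : G) × Fib x)) Filter.atTop
        (@nhds _ B.topTotal (⟨x, f x⟩ : (x : G) × Fib x))) →
      Filter.Tendsto (fun n => ∫ x, ε x (F n x) ∂μσ) Filter.atTop
        (nhds (∫ x, ε x (f x) ∂μσ))) := by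
  have part1 : ∀ f, B.MemSigmaC f →
      Measurable (fun x => ε x (f x)) ∧
      (∃ M : ℝ, ∀ x, ‖ε x (f x)‖ ≤ M) ∧
      (∃ K : Set G, IsCompact K ∧ ∀ x ∉ K, ε x (f x) = 0) := by
    intro f hf
    obtain ⟨⟨Mf, hMf⟩, F, K, M, hFc, hFb, hK, hK0, hpt⟩ := hf
    have hconv : ∀ x, Tendsto (fun n => F n x) atTop (𝓝 (f x)) :=
      fun x => B.fiber_tendsto (hpt x)
    have hεconv : ∀ x, Tendsto (fun n => ε x (F n x)) atTop (𝓝 (ε x (f x))) :=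
      fun x => ((ε x).continuous.tendsto _).comp (hconv x)
    refine ⟨?_, ⟨Mf, fun x => ?_⟩, K, hK, fun x hx => ?_⟩
    · exact measurable_of_tendsto_metrizable (fun n => hmeas (F n) (hFc n))
        (tendsto_pi_nhds.mpr hεconv)
    · calc ‖ε x (f x)‖ ≤ ‖ε x‖ * ‖f x‖ := (ε x).le_opNorm _
        _ ≤ 1 * Mf := mul_le_mul (hε x) (hMf x) (norm_nonneg _) zero_le_one
        _ = Mf := one_mul _
    · have hf0 : f x = 0 := by
        refine tendsto_nhds_unique (hconv x) ?_
        have : (fun n => F n x) = fun _ => (0 : Fib x) := by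
          funext n; exact hK0 n x hx
        rw [this]; exact tendsto_const_nhds
      rw [hf0, map_zero]
  refine ⟨part1, ?_⟩
  intro F f K M hFσ hfσ hK hK0 hFb hpt
  have hconv : ∀ x, Tendsto (fun n => F n x) atTop (𝓝 (f x)) :=
    fun x => B.fiber_tendsto (hpt x)
  refine tendsto_integral_of_dominated_convergence (K.indicator fun _ => M)
    (fun n => ((part1 (F n) (hFσ n)).1).aestronglyMeasurable) ?_ ?_ ?_
  · rw [integrable_indicator_iff hK.measurableSet]
    exact (integrableOn_const_iff).mpr (Or.inr (hμσ.1 K hK))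
  · intro n
    refine Filter.Eventually.of_forall fun x => ?_
    by_cases hx : x ∈ K
    · rw [Set.indicator_of_mem hx]
      calc ‖ε x (F n x)‖ ≤ ‖ε x‖ * ‖F n x‖ := (ε x).le_opNorm _
        _ ≤ 1 * M := mul_le_mul (hε x) (hFb n x) (norm_nonneg _) zero_le_one
        _ = M := one_mul _
    · rw [Set.indicator_of_notMem hx, hK0 n x hx, map_zero, norm_zero]
  · exact Filter.Eventually.of_forall fun x =>
      ((ε x).continuous.tendsto _).comp (hconv x)
end

section
/- Let p : 𝔅 → G be an upper semicontinuous Banach bundle over a second countable locally compact Hausdorff space G. Let φ : G → ℝ be a Borel function for which there is a sequence (φ_n) of nonnegative functions in C_c(G) with φ_n(x) decreasing to φ(x) for every x ∈ G. Fix n and suppose f ∈ Σ_c(G;𝔅) satisfies ‖f(x)‖ ≤ φ_n(x) for all x. Then there exist f₁, f₂ ∈ Σ_c(G;𝔅) with f = f₁ + f₂, ‖f₁(x)‖ ≤ φ(x) for all x, and ‖f₂(x)‖ ≤ φ_n(x) − φ(x) for all x. -/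
open MeasureTheory Filter Topology Set

namespace USCBanachBundle

variable {X : Type} [TopologicalSpace X] {Fib : X → Type}
  [∀ x, NormedAddCommGroup (Fib x)] [∀ x, NormedSpace ℂ (Fib x)]
  [∀ x, CompleteSpace (Fib x)]

lemma tendsto_add_aux (B : USCBanachBundle X Fib) {ι : Type} {l : Filter ι}
    {β : ι → X} {x : X} {u v : ∀ i, Fib (β i)} {u₀ v₀ : Fib x}
    (hu : Filter.Tendsto (fun i => (⟨β i, u i⟩ : (x : X) × Fib x)) l
      (@nhds _ B.topTotal ⟨x, u₀⟩))
    (hv : Filter.Tendsto (fun i => (⟨β i, v i⟩ : (x : X) × Fib x)) l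
      (@nhds _ B.topTotal ⟨x, v₀⟩)) :
    Filter.Tendsto (fun i => (⟨β i, u i + v i⟩ : (x : X) × Fib x)) l
      (@nhds _ B.topTotal ⟨x, u₀ + v₀⟩) := by
  letI := B.topTotal
  have hq : Filter.Tendsto
      (fun i => (⟨(⟨β i, u i⟩, ⟨β i, v i⟩), rfl⟩ :
        { q : ((x : X) × Fib x) × ((x : X) × Fib x) // q.1.1 = q.2.1 })) l
      (𝓝 ⟨(⟨x, u₀⟩, ⟨x, v₀⟩), rfl⟩) := by
    rw [tendsto_subtype_rng]
    exact hu.prodMk_nhds hv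
  have h := (B.continuous_add.tendsto _).comp hq
  simpa [Function.comp_def, cast_eq] using h

lemma eventually_norm_lt (B : USCBanachBundle X Fib) {g : ∀ x, Fib x}
    (hg : B.IsContSection g) (x₀ : X) {r : ℝ} (hr : ‖g x₀‖ < r) :
    ∀ᶠ x in 𝓝 x₀, ‖g x‖ < r := by
  letI := B.topTotal
  have h := (B.isOpen_norm_lt r).mem_nhds
    (show (⟨x₀, g x₀⟩ : (x : X) × Fib x) ∈ { b | ‖b.2‖ < r } from hr)
  exact hg.continuousAt h

lemma isContSection_smul (B : USCBanachBundle X Fib) {g : ∀ x, Fib x}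
    (hg : B.IsContSection g) {h : X → ℂ} (hh : Continuous h) :
    B.IsContSection (fun x => h x • g x) := by
  letI := B.topTotal
  have : Continuous (fun x => (⟨x, h x • g x⟩ : (x : X) × Fib x)) := by
    rw [continuous_iff_continuousAt]
    intro x₀
    have part1 : Filter.Tendsto (fun x => (⟨x, h x₀ • g x⟩ : (x : X) × Fib x))
        (𝓝 x₀) (𝓝 ⟨x₀, h x₀ • g x₀⟩) :=
      ((B.continuous_smul (h x₀)).tendsto ⟨x₀, g x₀⟩).comp hg.continuousAt
    have part2 : Filter.Tendsto (fun x => (⟨x, (h x - h x₀) • g x⟩ : (x : X) × Fib x))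
        (𝓝 x₀) (𝓝 ⟨x₀, (0 : Fib x₀)⟩) := by
      apply B.tendsto_zero
      · exact tendsto_id
      · have hb : ∀ᶠ x in 𝓝 x₀, ‖g x‖ < ‖g x₀‖ + 1 :=
          B.eventually_norm_lt hg x₀ (by linarith [norm_nonneg (g x₀)])
        apply squeeze_zero' (Filter.Eventually.of_forall fun x => norm_nonneg _)
          (g := fun x => ‖h x - h x₀‖ * (‖g x₀‖ + 1))
        · exact hb.mono fun x hx => by
            rw [norm_smul]
            exact mul_le_mul_of_nonneg_left hx.le (norm_nonneg _)
        · have h0 : Filter.Tendsto (fun x => ‖h x - h x₀‖) (𝓝 x₀) (𝓝 0) := by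
            have := ((hh.tendsto x₀).sub (tendsto_const_nhds :
              Filter.Tendsto (fun _ : X => h x₀) (𝓝 x₀) (𝓝 (h x₀)))).norm
            simpa using this
          simpa using h0.mul_const (‖g x₀‖ + 1)
    have key := B.tendsto_add_aux part1 part2
    have hsm : ∀ x, h x₀ • g x + (h x - h x₀) • g x = h x • g x := fun x => by
      rw [← add_smul]; congr 1; ring
    simpa [hsm, ContinuousAt] using key
  exact this

lemma tendsto_smul_aux (B : USCBanachBundle X Fib) {x : X}
    {v : ℕ → Fib x} {w : Fib x} {M : ℝ} (hM : ∀ k, ‖v k‖ ≤ M)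
    (hv : Filter.Tendsto (fun k => (⟨x, v k⟩ : (x : X) × Fib x)) Filter.atTop
      (@nhds _ B.topTotal ⟨x, w⟩))
    {c : ℕ → ℂ} {c₀ : ℂ} (hc : Filter.Tendsto c Filter.atTop (𝓝 c₀)) :
    Filter.Tendsto (fun k => (⟨x, c k • v k⟩ : (x : X) × Fib x)) Filter.atTop
      (@nhds _ B.topTotal ⟨x, c₀ • w⟩) := by
  letI := B.topTotal
  have part1 : Filter.Tendsto (fun k => (⟨x, c₀ • v k⟩ : (x : X) × Fib x))
      Filter.atTop (𝓝 ⟨x, c₀ • w⟩) :=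
    ((B.continuous_smul c₀).tendsto ⟨x, w⟩).comp hv
  have part2 : Filter.Tendsto (fun k => (⟨x, (c k - c₀) • v k⟩ : (x : X) × Fib x))
      Filter.atTop (𝓝 ⟨x, (0 : Fib x)⟩) := by
    apply B.tendsto_zero
    · exact tendsto_const_nhds
    · apply squeeze_zero (fun k => norm_nonneg _)
        (g := fun k => ‖c k - c₀‖ * max M 0)
      · intro k
        rw [norm_smul]
        exact mul_le_mul_of_nonneg_left ((hM k).trans (le_max_left _ _))
          (norm_nonneg _)
      · have h0 : Filter.Tendsto (fun k => ‖c k - c₀‖) Filter.atTop (𝓝 0) := by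
          have := (hc.sub (tendsto_const_nhds :
            Filter.Tendsto (fun _ : ℕ => c₀) Filter.atTop (𝓝 c₀))).norm
          simpa using this
        simpa using h0.mul_const (max M 0)
  have key := B.tendsto_add_aux part1 part2
  have hsm : ∀ k, c₀ • v k + (c k - c₀) • v k = c k • v k := fun k => by
    rw [← add_smul]; congr 1; ring
  simpa [hsm] using key

lemma memSigmaC_smul (B : USCBanachBundle X Fib) {f : ∀ x, Fib x}
    (hf : B.MemSigmaC f) {t : X → ℝ} {tk : ℕ → X → ℝ}
    (htk_cont : ∀ k, Continuous (tk k)) (htk_bd : ∀ k x, |tk k x| ≤ 1)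
    (htk_lim : ∀ x, Filter.Tendsto (fun k => tk k x) Filter.atTop (𝓝 (t x))) :
    B.MemSigmaC (fun x => ((t x : ℝ) : ℂ) • f x) := by
  obtain ⟨⟨Mf, hMf⟩, F, K, M, hFgc, hFbd, hK, hFsupp, hFlim⟩ := hf
  have ht_bd : ∀ x, |t x| ≤ 1 := fun x =>
    le_of_tendsto (htk_lim x).abs (Filter.Eventually.of_forall fun k => htk_bd k x)
  constructor
  · refine ⟨max Mf 0, fun x => ?_⟩
    rw [norm_smul, Complex.norm_real, Real.norm_eq_abs]
    calc |t x| * ‖f x‖ ≤ 1 * max Mf 0 :=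
          mul_le_mul (ht_bd x) ((hMf x).trans (le_max_left _ _)) (norm_nonneg _)
            zero_le_one
      _ = max Mf 0 := one_mul _
  · refine ⟨fun k x => ((tk k x : ℝ) : ℂ) • F k x, K, max M 0, fun k => ?_,
      fun k x => ?_, hK, fun k x hx => ?_, fun x => ?_⟩
    · exact ⟨B.isContSection_smul (hFgc k).1
        (Complex.continuous_ofReal.comp (htk_cont k)),
        K, hK, fun x hx => by
          show ((tk k x : ℝ) : ℂ) • F k x = 0
          rw [hFsupp k x hx, smul_zero]⟩
    · rw [norm_smul, Complex.norm_real, Real.norm_eq_abs]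
      calc |tk k x| * ‖F k x‖ ≤ 1 * max M 0 :=
            mul_le_mul (htk_bd k x) ((hFbd k x).trans (le_max_left _ _))
              (norm_nonneg _) zero_le_one
        _ = max M 0 := one_mul _
    · show ((tk k x : ℝ) : ℂ) • F k x = 0
      rw [hFsupp k x hx, smul_zero]
    · exact B.tendsto_smul_aux (fun k => hFbd k x) (hFlim x)
        ((Complex.continuous_ofReal.tendsto _).comp (htk_lim x))

end USCBanachBundle

/-- Lemma 3.10 of the paper: if `φₙ ∈ C_c(G)⁺` decrease pointwise to
the Borel function `φ` and `f ∈ Σ_c(G;𝔅)` satisfies `‖f x‖ ≤ φₙ x` for a fixed `n`,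
then `f` splits as `f = f₁ + f₂` with `f₁, f₂ ∈ Σ_c(G;𝔅)`, `‖f₁ x‖ ≤ φ x` and
`‖f₂ x‖ ≤ φₙ x - φ x` for all `x`. -/
theorem USCBanachBundle.sigma_c_split
    {G : Type} [TopologicalSpace G] [SecondCountableTopology G]
    [LocallyCompactSpace G] [T2Space G]
    [MeasurableSpace G] [BorelSpace G]
    {Fib : G → Type}
    [∀ x, NormedAddCommGroup (Fib x)] [∀ x, NormedSpace ℂ (Fib x)]
    [∀ x, CompleteSpace (Fib x)]
    (B : USCBanachBundle G Fib)
    (φ : G → ℝ) (hφ_borel : Measurable φ)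
    (φseq : ℕ → G → ℝ)
    (hφseq_cont : ∀ n, Continuous (φseq n))
    (hφseq_supp : ∀ n, HasCompactSupport (φseq n))
    (hφseq_nonneg : ∀ n x, 0 ≤ φseq n x)
    (hφseq_anti : ∀ x, Antitone fun n => φseq n x)
    (hφseq_lim : ∀ x, Filter.Tendsto (fun n => φseq n x) Filter.atTop (nhds (φ x)))
    (n : ℕ) (f : ∀ x, Fib x) (hf : B.MemSigmaC f)
    (hfle : ∀ x, ‖f x‖ ≤ φseq n x) :
    ∃ f₁ f₂ : ∀ x, Fib x, B.MemSigmaC f₁ ∧ B.MemSigmaC f₂ ∧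
      (∀ x, f x = f₁ x + f₂ x) ∧
      (∀ x, ‖f₁ x‖ ≤ φ x) ∧ (∀ x, ‖f₂ x‖ ≤ φseq n x - φ x) := by

  classical
  have hφ_nonneg : ∀ x, 0 ≤ φ x := fun x =>
    ge_of_tendsto' (hφseq_lim x) (fun k => hφseq_nonneg k x)
  have hφ_le : ∀ m x, φ x ≤ φseq m x := fun m x =>
    le_of_tendsto (hφseq_lim x)
      (Filter.eventually_atTop.2 ⟨m, fun k hk => hφseq_anti x hk⟩)
  set s : G → ℝ := fun x => if φseq n x = 0 then 0 else φ x / φseq n x with hs_def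
  set sk : ℕ → G → ℝ :=
    fun k x => φseq (max k n) x / max (φseq n x) ((1 : ℝ) / (k + 1)) with hsk_def
  have hden_pos : ∀ (k : ℕ) (x : G), (0:ℝ) < max (φseq n x) ((1 : ℝ) / (k + 1)) :=
    fun k x => lt_of_lt_of_le (by positivity) (le_max_right _ _)
  have hsk_cont : ∀ k, Continuous (sk k) := fun k =>
    (hφseq_cont (max k n)).div ((hφseq_cont n).max continuous_const)
      (fun x => (hden_pos k x).ne')
  have hsk_nonneg : ∀ k x, 0 ≤ sk k x := fun k x =>
    div_nonneg (hφseq_nonneg _ x) (hden_pos k x).le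
  have hsk_le_one : ∀ k x, sk k x ≤ 1 := fun k x =>
    (div_le_one (hden_pos k x)).2
      ((hφseq_anti x (le_max_right k n)).trans (le_max_left _ _))
  have hs_nonneg : ∀ x, 0 ≤ s x := by
    intro x
    by_cases h : φseq n x = 0
    · simp [hs_def, h]
    · simp only [hs_def, if_neg h]
      exact div_nonneg (hφ_nonneg x) (hφseq_nonneg n x)
  have hs_le_one : ∀ x, s x ≤ 1 := by
    intro x
    by_cases h : φseq n x = 0
    · simp [hs_def, h]
    · simp only [hs_def, if_neg h]
      exact (div_le_one (lt_of_le_of_ne (hφseq_nonneg n x) (Ne.symm h))).2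
        (hφ_le n x)
  have hsk_lim : ∀ x, Filter.Tendsto (fun k => sk k x) Filter.atTop (𝓝 (s x)) := by
    intro x
    by_cases h : φseq n x = 0
    · have hz : ∀ k, sk k x = 0 := fun k => by
        have h0 : φseq (max k n) x = 0 :=
          le_antisymm ((hφseq_anti x (le_max_right k n)).trans h.le)
            (hφseq_nonneg _ x)
        simp [hsk_def, h0]
      have hsx : s x = 0 := by simp [hs_def, h]
      rw [hsx, show (fun k => sk k x) = fun _ => (0:ℝ) from funext hz]
      exact tendsto_const_nhds
    · have hpos : 0 < φseq n x := lt_of_le_of_ne (hφseq_nonneg n x) (Ne.symm h)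
      have hnum : Filter.Tendsto (fun k => φseq (max k n) x) Filter.atTop
          (𝓝 (φ x)) :=
        (hφseq_lim x).comp
          (tendsto_atTop_mono (fun k => le_max_left k n) tendsto_id)
      have hden : Filter.Tendsto
          (fun k : ℕ => max (φseq n x) ((1 : ℝ) / (k + 1))) Filter.atTop
          (𝓝 (φseq n x)) := by
        have h1 : Filter.Tendsto (fun k : ℕ => (1:ℝ) / (k + 1)) Filter.atTop
            (𝓝 0) := tendsto_one_div_add_atTop_nhds_zero_nat
        have h2 := (tendsto_const_nhds :
          Filter.Tendsto (fun _ : ℕ => φseq n x) Filter.atTop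
            (𝓝 (φseq n x))).max h1
        simpa [max_eq_left (hφseq_nonneg n x)] using h2
      have hq := hnum.div hden (ne_of_gt hpos)
      have hsx : s x = φ x / φseq n x := by simp [hs_def, h]
      rw [hsx]
      exact hq
  refine ⟨fun x => ((s x : ℝ) : ℂ) • f x, fun x => ((1 - s x : ℝ) : ℂ) • f x,
    B.memSigmaC_smul (t := s) (tk := sk) hf hsk_cont (fun k x => ?_) hsk_lim,
    B.memSigmaC_smul (t := fun x => 1 - s x) (tk := fun k x => 1 - sk k x) hf
      (fun k => continuous_const.sub (hsk_cont k))
      (fun k x => ?_) (fun x => tendsto_const_nhds.sub (hsk_lim x)),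
    fun x => ?_, fun x => ?_, fun x => ?_⟩
  · rw [abs_of_nonneg (hsk_nonneg k x)]
    exact hsk_le_one k x
  · show |1 - sk k x| ≤ 1
    exact abs_le.2 ⟨by linarith [hsk_le_one k x], by linarith [hsk_nonneg k x]⟩
  · have hone : ((s x : ℂ)) + ((1 - s x : ℝ) : ℂ) = 1 := by push_cast; ring
    rw [← add_smul, hone, one_smul]
  · rw [norm_smul, Complex.norm_real, Real.norm_eq_abs,
      abs_of_nonneg (hs_nonneg x)]
    by_cases h : φseq n x = 0
    · have h1 : s x = 0 := by simp [hs_def, h]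
      rw [h1, zero_mul]
      exact hφ_nonneg x
    · have hpos : 0 < φseq n x := lt_of_le_of_ne (hφseq_nonneg n x) (Ne.symm h)
      calc s x * ‖f x‖ ≤ s x * φseq n x :=
            mul_le_mul_of_nonneg_left (hfle x) (hs_nonneg x)
        _ = φ x := by
            simp only [hs_def]
            rw [if_neg h]
            exact div_mul_cancel₀ _ (ne_of_gt hpos)
  · rw [norm_smul, Complex.norm_real, Real.norm_eq_abs,
      abs_of_nonneg (by linarith [hs_le_one x] : (0:ℝ) ≤ 1 - s x)]
    by_cases h : φseq n x = 0
    · have hf0 : ‖f x‖ = 0 :=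
        le_antisymm ((hfle x).trans h.le) (norm_nonneg _)
      have hφ0 : φ x = 0 := le_antisymm ((hφ_le n x).trans h.le) (hφ_nonneg x)
      rw [hf0, mul_zero, h, hφ0]
      norm_num
    · have hpos : 0 < φseq n x := lt_of_le_of_ne (hφseq_nonneg n x) (Ne.symm h)
      have hsx : s x * φseq n x = φ x := by
        simp only [hs_def]
        rw [if_neg h]
        exact div_mul_cancel₀ _ (ne_of_gt hpos)
      calc (1 - s x) * ‖f x‖ ≤ (1 - s x) * φseq n x :=
            mul_le_mul_of_nonneg_left (hfle x)
              (by linarith [hs_le_one x])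
        _ = φseq n x - φ x := by rw [sub_mul, one_mul, hsx]
end

section
/- Let p : 𝔅 → G be an upper semicontinuous Banach bundle over a second countable locally compact Hausdorff space G such that Γ₀(G;𝔅) is separable, and let σ be a generalized Radon measure on 𝔅 with total variation |σ|, represented as σ(f) = ∫_G ε_x(f(x)) d|σ|(x) with ε_x ∈ B(x)*, ‖ε_x‖ ≤ 1; extend σ to Σ_c(G;𝔅) by the same integral formula. Suppose φ : G → ℝ is a Borel function for which there is a sequence (φ_n) of nonnegative functions in C_c(G) with φ_n(x) decreasing to φ(x) for every x ∈ G. Then ∫_G φ d|σ| = sup{ |σ(f)| : f ∈ Σ_c(G;𝔅) and ‖f(x)‖ ≤ φ(x) for all x ∈ G }. -/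
open MeasureTheory Filter Topology Set

namespace USCBanachBundle

variable {X : Type} [TopologicalSpace X] {Fib : X → Type}
  [∀ x, NormedAddCommGroup (Fib x)] [∀ x, NormedSpace ℂ (Fib x)]
  [∀ x, CompleteSpace (Fib x)] (B : USCBanachBundle X Fib)

lemma tendsto_add' {ι : Type} (l : Filter ι) (z : ι → X)
    (u v : (i : ι) → Fib (z i)) (x : X) (u₀ v₀ : Fib x)
    (hu : Tendsto (fun i => (⟨z i, u i⟩ : (x : X) × Fib x)) l
      (@nhds _ B.topTotal ⟨x, u₀⟩))
    (hv : Tendsto (fun i => (⟨z i, v i⟩ : (x : X) × Fib x)) l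
      (@nhds _ B.topTotal ⟨x, v₀⟩)) :
    Tendsto (fun i => (⟨z i, u i + v i⟩ : (x : X) × Fib x)) l
      (@nhds _ B.topTotal ⟨x, u₀ + v₀⟩) := by
  letI : TopologicalSpace ((x : X) × Fib x) := B.topTotal
  have hF : Tendsto
      (fun i => (⟨(⟨z i, u i⟩, ⟨z i, v i⟩), rfl⟩ :
        { q : ((x : X) × Fib x) × ((x : X) × Fib x) // q.1.1 = q.2.1 })) l
      (nhds (⟨(⟨x, u₀⟩, ⟨x, v₀⟩), rfl⟩ :
          { q : ((x : X) × Fib x) × ((x : X) × Fib x) // q.1.1 = q.2.1 })) := by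
    rw [tendsto_subtype_rng, nhds_prod_eq]
    exact hu.prodMk hv
  exact (B.continuous_add.tendsto _).comp hF

lemma tendsto_fiber_of_norm (x : X) (a : ℕ → Fib x) (v : Fib x)
    (h : Tendsto (fun k => ‖a k - v‖) atTop (nhds (0 : ℝ))) :
    Tendsto (fun k => (⟨x, a k⟩ : (x : X) × Fib x)) atTop
      (@nhds _ B.topTotal ⟨x, v⟩) := by
  letI : TopologicalSpace ((x : X) × Fib x) := B.topTotal
  have h1 : Tendsto (fun k => (⟨x, a k - v⟩ : (x : X) × Fib x)) atTop
      (nhds ⟨x, 0⟩) :=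
    B.tendsto_zero (atTop : Filter ℕ) _ x tendsto_const_nhds h
  have h2 : Tendsto (fun _ : ℕ => (⟨x, v⟩ : (x : X) × Fib x)) atTop
      (nhds ⟨x, v⟩) := tendsto_const_nhds
  have h3 := B.tendsto_add' (atTop : Filter ℕ) (fun _ => x) (fun k => a k - v) (fun _ => v) x 0 v h1 h2
  simpa using h3

lemma norm_tendsto_of_tendsto_fiber (x : X) (a : ℕ → Fib x) (v : Fib x)
    (h : Tendsto (fun k => (⟨x, a k⟩ : (x : X) × Fib x)) atTop
      (@nhds _ B.topTotal ⟨x, v⟩)) :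
    Tendsto (fun k => ‖a k - v‖) atTop (nhds (0 : ℝ)) := by
  letI : TopologicalSpace ((x : X) × Fib x) := B.topTotal
  have h2 : Tendsto (fun _ : ℕ => (⟨x, -v⟩ : (x : X) × Fib x)) atTop
      (nhds ⟨x, -v⟩) := tendsto_const_nhds
  have h3 := B.tendsto_add' (atTop : Filter ℕ) (fun _ => x) (fun k => a k) (fun _ => -v) x v (-v) h h2
  rw [add_neg_cancel] at h3
  rw [Metric.tendsto_atTop]
  intro ε hε
  have hev : ∀ᶠ k in atTop, ‖a k + -v‖ < ε :=
    h3.eventually (eventually_of_mem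
      ((B.isOpen_norm_lt ε).mem_nhds (by simpa using hε)) (fun b hb => hb))
  obtain ⟨N, hN⟩ := eventually_atTop.1 hev
  refine ⟨N, fun n hn => ?_⟩
  have h4 := hN n hn
  rw [← sub_eq_add_neg] at h4
  simpa [Real.dist_eq, abs_of_nonneg (norm_nonneg _)] using h4

lemma contSection_smul_s9 (g : ∀ x, Fib x) (hg : B.IsContSection g) (ψ : X → ℝ)
    (hψ : Continuous ψ) : B.IsContSection (fun x => (ψ x : ℂ) • g x) := by
  letI : TopologicalSpace ((x : X) × Fib x) := B.topTotal
  rw [IsContSection, continuous_iff_continuousAt]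
  intro x₀
  have hgc : Continuous (fun x => (⟨x, g x⟩ : (x : X) × Fib x)) := hg
  have t1 : Tendsto (fun x => (⟨x, (ψ x₀ : ℂ) • g x⟩ : (x : X) × Fib x)) (nhds x₀)
      (nhds ⟨x₀, (ψ x₀ : ℂ) • g x₀⟩) :=
    ((B.continuous_smul (ψ x₀)).tendsto ⟨x₀, g x₀⟩).comp (hgc.tendsto x₀)
  have hbd : ∀ᶠ x in nhds x₀, ‖g x‖ < ‖g x₀‖ + 1 :=
    (hgc.tendsto x₀).eventually (eventually_of_mem
      ((B.isOpen_norm_lt (‖g x₀‖ + 1)).mem_nhds (by simp [lt_add_one])) (fun b hb => hb))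
  have hψ0 : Tendsto (fun x => |ψ x - ψ x₀| * (‖g x₀‖ + 1)) (nhds x₀) (nhds 0) := by
    have h5 : Tendsto (fun x => |ψ x - ψ x₀| * (‖g x₀‖ + 1)) (nhds x₀)
        (nhds (|ψ x₀ - ψ x₀| * (‖g x₀‖ + 1))) :=
      (((hψ.tendsto x₀).sub tendsto_const_nhds).abs).mul_const _
    simpa using h5
  have t2 : Tendsto (fun x => (⟨x, ((ψ x : ℂ) - (ψ x₀ : ℂ)) • g x⟩ : (x : X) × Fib x))
      (nhds x₀) (nhds ⟨x₀, 0⟩) := by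
    refine B.tendsto_zero (nhds x₀) _ x₀ tendsto_id ?_
    refine squeeze_zero' (Eventually.of_forall fun x => norm_nonneg _) ?_ hψ0
    filter_upwards [hbd] with x hx
    rw [norm_smul]
    have h6 : ‖(ψ x : ℂ) - (ψ x₀ : ℂ)‖ = |ψ x - ψ x₀| := by
      rw [← Complex.ofReal_sub, Complex.norm_real, Real.norm_eq_abs]
    rw [h6]
    exact mul_le_mul_of_nonneg_left hx.le (abs_nonneg _)
  have h7 := B.tendsto_add' (nhds x₀) (fun x => x) (fun x => (ψ x₀ : ℂ) • g x)
    (fun x => ((ψ x : ℂ) - (ψ x₀ : ℂ)) • g x) x₀ _ _ t1 t2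
  have heq : (fun x => (⟨x, (ψ x₀ : ℂ) • g x + ((ψ x : ℂ) - (ψ x₀ : ℂ)) • g x⟩ :
      (x : X) × Fib x)) = fun x => (⟨x, (ψ x : ℂ) • g x⟩ : (x : X) × Fib x) := by
    funext x
    congr 1
    rw [← add_smul]
    ring_nf
  rw [heq] at h7
  simpa [ContinuousAt] using h7

lemma exists_bound (g : ∀ x, Fib x) (hg : B.IsContSection g) (K : Set X)
    (hK : IsCompact K) (h0 : ∀ x ∉ K, g x = 0) :
    ∃ M : ℝ, 0 ≤ M ∧ ∀ x, ‖g x‖ ≤ M := by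
  letI : TopologicalSpace ((x : X) × Fib x) := B.topTotal
  have hgc : Continuous (fun x => (⟨x, g x⟩ : (x : X) × Fib x)) := hg
  have hU : ∀ x ∈ K, {y | ‖g y‖ < ‖g x‖ + 1} ∈ nhds x := by
    intro x _
    have ho : IsOpen {y | ‖g y‖ < ‖g x‖ + 1} :=
      (B.isOpen_norm_lt (‖g x‖ + 1)).preimage hgc
    exact ho.mem_nhds (by simp [lt_add_one])
  obtain ⟨t, _, hcov⟩ := hK.elim_nhds_subcover (fun x => {y | ‖g y‖ < ‖g x‖ + 1}) hU
  obtain ⟨M₀, hM₀⟩ := (t.finite_toSet.image fun x => ‖g x‖ + 1).bddAbove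
  refine ⟨max M₀ 0, le_max_right _ _, fun x => ?_⟩
  by_cases hx : x ∈ K
  · obtain ⟨y, hyt, hy⟩ := by simpa using hcov hx
    exact le_max_of_le_left (hy.le.trans (hM₀ ⟨y, by simpa using hyt, rfl⟩))
  · simp [h0 x hx]

end USCBanachBundle

/-- Lemma 3.8 of the paper: with `σ` a generalized Radon measure with
total variation `|σ| = μσ`, represented as `σ f = ∫ ε_x (f x) d|σ|(x)` (`‖ε_x‖ ≤ 1`)
and extended to `Σ_c(G;𝔅)` by the same integral formula, if `φₙ ∈ C_c(G)⁺` decrease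
pointwise to the Borel function `φ`, then
`∫ φ d|σ| = sup { |σ f| : f ∈ Σ_c(G;𝔅), ‖f x‖ ≤ φ x for all x }`. -/
theorem USCBanachBundle.totalVariation_integral_eq_sSup_sigma_c
    {G : Type} [TopologicalSpace G] [SecondCountableTopology G]
    [LocallyCompactSpace G] [T2Space G]
    [MeasurableSpace G] [BorelSpace G]
    {Fib : G → Type}
    [∀ x, NormedAddCommGroup (Fib x)] [∀ x, NormedSpace ℂ (Fib x)]
    [∀ x, CompleteSpace (Fib x)]
    (B : USCBanachBundle G Fib)
    (hsep : B.SeparableGammaZero)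
    (σ : (∀ x, Fib x) → ℂ) (hσ : B.IsGRM σ)
    (μσ : Measure G) (hμσ : B.IsTotalVariation σ μσ)
    (ε : (x : G) → (Fib x →L[ℂ] ℂ)) (hε : ∀ x, ‖ε x‖ ≤ 1)
    (hmeas : ∀ f, B.MemGammaC f → Measurable fun x => ε x (f x))
    (hrep : ∀ f, B.MemGammaC f → σ f = ∫ x, ε x (f x) ∂μσ)
    (φ : G → ℝ) (hφ_borel : Measurable φ)
    (φseq : ℕ → G → ℝ)
    (hφseq_cont : ∀ n, Continuous (φseq n))
    (hφseq_supp : ∀ n, HasCompactSupport (φseq n))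
    (hφseq_nonneg : ∀ n x, 0 ≤ φseq n x)
    (hφseq_anti : ∀ x, Antitone fun n => φseq n x)
    (hφseq_lim : ∀ x, Filter.Tendsto (fun n => φseq n x) Filter.atTop (nhds (φ x))) :
    ∫ x, φ x ∂μσ =
      sSup { r : ℝ | ∃ f, B.MemSigmaC f ∧ (∀ x, ‖f x‖ ≤ φ x) ∧
        r = ‖∫ x, ε x (f x) ∂μσ‖ } := by
  classical
  haveI : IsFiniteMeasureOnCompacts μσ := ⟨fun _ hK => hμσ.1 _ hK⟩
  have hφ_nonneg : ∀ x, 0 ≤ φ x := fun x =>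
    ge_of_tendsto' (hφseq_lim x) (fun n => hφseq_nonneg n x)
  have hφ_le : ∀ n x, φ x ≤ φseq n x := fun n x =>
    le_of_tendsto (hφseq_lim x)
      (eventually_atTop.2 ⟨n, fun k hk => hφseq_anti x hk⟩)
  have hint_n : ∀ n, Integrable (φseq n) μσ := fun n =>
    (hφseq_cont n).integrable_of_hasCompactSupport (hφseq_supp n)
  have hφ_int : Integrable φ μσ := by
    refine (hint_n 0).mono hφ_borel.aestronglyMeasurable (ae_of_all _ fun x => ?_)
    rw [Real.norm_eq_abs, Real.norm_eq_abs, abs_of_nonneg (hφ_nonneg x),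
      abs_of_nonneg (hφseq_nonneg 0 x)]
    exact hφ_le 0 x
  have hconv : Tendsto (fun n => ∫ x, φseq n x ∂μσ) atTop (𝓝 (∫ x, φ x ∂μσ)) := by
    refine tendsto_integral_of_dominated_convergence (φseq 0)
      (fun n => (hφseq_cont n).aestronglyMeasurable) (hint_n 0)
      (fun n => ae_of_all _ fun x => ?_) (ae_of_all _ hφseq_lim)
    rw [Real.norm_eq_abs, abs_of_nonneg (hφseq_nonneg n x)]
    exact hφseq_anti x (Nat.zero_le n)
  have hub : ∀ f : ∀ x, Fib x, (∀ x, ‖f x‖ ≤ φ x) →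
      ‖∫ x, ε x (f x) ∂μσ‖ ≤ ∫ x, φ x ∂μσ := by
    intro f hf
    refine le_trans (norm_integral_le_integral_norm _) ?_
    refine integral_mono_of_nonneg (ae_of_all _ fun x => norm_nonneg _) hφ_int
      (ae_of_all _ fun x => ?_)
    refine le_trans ((ε x).le_opNorm (f x)) ?_
    refine le_trans (mul_le_mul_of_nonneg_right (hε x) (norm_nonneg _)) ?_
    simpa using hf x
  have hzero_gc : B.MemGammaC (fun x => (0 : Fib x)) :=
    ⟨B.contSection_zero, ∅, isCompact_empty, fun x _ => rfl⟩
  have hσ0 : σ (fun x => (0 : Fib x)) = 0 := by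
    have h := hσ.2.1 0 (fun x => (0 : Fib x)) hzero_gc
    simpa using h
  have hzero_sc : B.MemSigmaC (fun x => (0 : Fib x)) := by
    refine ⟨⟨0, fun x => by simp⟩, fun _ x => 0, ∅, 0, fun _ => hzero_gc,
      fun _ x => by simp, isCompact_empty, fun _ x _ => rfl, fun x => by
        letI : TopologicalSpace ((x : G) × Fib x) := B.topTotal
        exact tendsto_const_nhds⟩
  have h0T : (0 : ℝ) ∈ { r : ℝ | ∃ f, B.MemSigmaC f ∧ (∀ x, ‖f x‖ ≤ φ x) ∧
      r = ‖∫ x, ε x (f x) ∂μσ‖ } :=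
    ⟨fun x => (0 : Fib x), hzero_sc, fun x => by simpa using hφ_nonneg x, by simp⟩
  have hubT : ∀ r ∈ { r : ℝ | ∃ f, B.MemSigmaC f ∧ (∀ x, ‖f x‖ ≤ φ x) ∧
      r = ‖∫ x, ε x (f x) ∂μσ‖ }, r ≤ ∫ x, φ x ∂μσ := by
    rintro r ⟨f, _, hfφ, rfl⟩
    exact hub f hfφ
  have hbddT : BddAbove { r : ℝ | ∃ f, B.MemSigmaC f ∧ (∀ x, ‖f x‖ ≤ φ x) ∧
      r = ‖∫ x, ε x (f x) ∂μσ‖ } := ⟨_, hubT⟩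
  refine le_antisymm ?_ (csSup_le ⟨0, h0T⟩ hubT)
  refine le_of_forall_pos_le_add fun δ hδ => ?_
  obtain ⟨n, hn⟩ := (hconv.eventually
    (gt_mem_nhds (lt_add_of_pos_right _ (half_pos hδ)))).exists
  -- hn : ∫ φseq n < ∫ φ + δ/2
  have hTV := hμσ.2 (φseq n) (hφseq_cont n) (hφseq_supp n) (hφseq_nonneg n)
  have hS0 : (0 : ℝ) ∈ { r : ℝ | ∃ f, B.MemGammaC f ∧ (∀ x, ‖f x‖ ≤ φseq n x) ∧
      r = ‖σ f‖ } :=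
    ⟨fun x => (0 : Fib x), hzero_gc, fun x => by simpa using hφseq_nonneg n x,
      by simp [hσ0]⟩
  have hlt : (∫ x, φseq n x ∂μσ) - δ / 2 < sSup { r : ℝ | ∃ f, B.MemGammaC f ∧
      (∀ x, ‖f x‖ ≤ φseq n x) ∧ r = ‖σ f‖ } := by
    rw [← hTV]; linarith [half_pos hδ]
  obtain ⟨r, ⟨g, hgGC, hgle, hr⟩, hrgt⟩ := exists_lt_of_lt_csSup ⟨0, hS0⟩ hlt
  obtain ⟨Kg, hKgc, hKg0⟩ := hgGC.2
  obtain ⟨M, hM0, hMg⟩ := B.exists_bound g hgGC.1 Kg hKgc hKg0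
  set h : G → ℝ := fun x => φ x / φseq n x with hh
  have h_nonneg : ∀ x, 0 ≤ h x := fun x =>
    div_nonneg (hφ_nonneg x) (hφseq_nonneg n x)
  have h_le_one : ∀ x, h x ≤ 1 := by
    intro x
    by_cases hx : φseq n x = 0
    · simp [hh, hx]
    · exact div_le_one_of_le₀ (hφ_le n x) (hφseq_nonneg n x)
  have hgz : ∀ x, φseq n x = 0 → g x = 0 := by
    intro x hx
    have := (hgle x).trans_eq hx
    exact norm_le_zero_iff.1 this
  set f : ∀ x, Fib x := fun x => (h x : ℂ) • g x with hf
  have hf_norm : ∀ x, ‖f x‖ = h x * ‖g x‖ := by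
    intro x
    rw [hf, norm_smul, Complex.norm_real, Real.norm_eq_abs,
      abs_of_nonneg (h_nonneg x)]
  have hf_le_φ : ∀ x, ‖f x‖ ≤ φ x := by
    intro x
    rw [hf_norm]
    by_cases hx : φseq n x = 0
    · simp [hgz x hx, hφ_nonneg x]
    · calc h x * ‖g x‖ ≤ h x * φseq n x :=
            mul_le_mul_of_nonneg_left (hgle x) (h_nonneg x)
        _ = φ x := div_mul_cancel₀ _ hx
  have hfg_norm : ∀ x, ‖ε x (g x) - ε x (f x)‖ ≤ φseq n x - φ x := by
    intro x
    rw [← map_sub]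
    refine le_trans ((ε x).le_opNorm _) ?_
    have h1 : ‖g x - f x‖ ≤ φseq n x - φ x := by
      by_cases hx : φseq n x = 0
      · have hφx : φ x = 0 := le_antisymm (hx ▸ hφ_le n x) (hφ_nonneg x)
        simp [hf, hgz x hx, hx, hφx]
      · have heq : g x - f x = ((1 - h x : ℝ) : ℂ) • g x := by
          rw [hf]
          push_cast
          rw [sub_smul, one_smul]
        rw [heq, norm_smul, Complex.norm_real, Real.norm_eq_abs,
          abs_of_nonneg (by linarith [h_le_one x])]
        calc (1 - h x) * ‖g x‖ ≤ (1 - h x) * φseq n x :=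
              mul_le_mul_of_nonneg_left (hgle x) (by linarith [h_le_one x])
          _ = φseq n x - φ x := by
              rw [sub_mul, one_mul, hh, div_mul_cancel₀ _ hx]
    refine le_trans (mul_le_mul_of_nonneg_right (hε x) (norm_nonneg _)) ?_
    simpa using h1
  have hmg : Measurable fun x => ε x (g x) := hmeas g hgGC
  have hmh : Measurable h := hφ_borel.div (hφseq_cont n).measurable
  have hmf : Measurable fun x => ε x (f x) := by
    have heq : (fun x => ε x (f x)) = fun x => (h x : ℂ) * ε x (g x) := by
      funext x
      rw [hf, ContinuousLinearMap.map_smul, smul_eq_mul]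
    rw [heq]
    exact (Complex.measurable_ofReal.comp hmh).mul hmg
  have hig : Integrable (fun x => ε x (g x)) μσ := by
    refine (hint_n n).mono hmg.aestronglyMeasurable (ae_of_all _ fun x => ?_)
    rw [Real.norm_eq_abs, abs_of_nonneg (hφseq_nonneg n x)]
    calc ‖(ε x) (g x)‖ ≤ ‖ε x‖ * ‖g x‖ := (ε x).le_opNorm _
      _ ≤ 1 * ‖g x‖ := mul_le_mul_of_nonneg_right (hε x) (norm_nonneg _)
      _ = ‖g x‖ := one_mul _
      _ ≤ φseq n x := hgle x
  have hif : Integrable (fun x => ε x (f x)) μσ := by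
    refine hφ_int.mono hmf.aestronglyMeasurable (ae_of_all _ fun x => ?_)
    rw [Real.norm_eq_abs, abs_of_nonneg (hφ_nonneg x)]
    calc ‖(ε x) (f x)‖ ≤ ‖ε x‖ * ‖f x‖ := (ε x).le_opNorm _
      _ ≤ 1 * ‖f x‖ := mul_le_mul_of_nonneg_right (hε x) (norm_nonneg _)
      _ = ‖f x‖ := one_mul _
      _ ≤ φ x := hf_le_φ x
  have hdiff : ‖(∫ x, ε x (g x) ∂μσ) - ∫ x, ε x (f x) ∂μσ‖ ≤
      (∫ x, φseq n x ∂μσ) - ∫ x, φ x ∂μσ := by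
    rw [← integral_sub hig hif, ← integral_sub (hint_n n) hφ_int]
    refine le_trans (norm_integral_le_integral_norm _) ?_
    exact integral_mono_of_nonneg (ae_of_all _ fun x => norm_nonneg _)
      ((hint_n n).sub hφ_int) (ae_of_all _ hfg_norm)
  -- f is in Σ_c
  set ψ : ℕ → G → ℝ :=
    fun k x => min 1 (φseq k x / (φseq n x + ((k : ℝ) + 1)⁻¹)) with hψ
  have hden_pos : ∀ (k : ℕ) (x : G), 0 < φseq n x + ((k : ℝ) + 1)⁻¹ := by
    intro k x
    have hpos : (0 : ℝ) < ((k : ℝ) + 1)⁻¹ := by positivity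
    linarith [hφseq_nonneg n x]
  have hψcont : ∀ k, Continuous (ψ k) := by
    intro k
    refine continuous_const.min ((hφseq_cont k).div ((hφseq_cont n).add continuous_const) ?_)
    exact fun x => ne_of_gt (hden_pos k x)
  have hψ0 : ∀ k x, 0 ≤ ψ k x := fun k x =>
    le_min zero_le_one (div_nonneg (hφseq_nonneg k x) (hden_pos k x).le)
  have hψ1 : ∀ k x, ψ k x ≤ 1 := fun k x => min_le_left _ _
  set F : ℕ → ∀ x, Fib x := fun k x => (ψ k x : ℂ) • g x with hF
  have hFGC : ∀ k, B.MemGammaC (F k) := fun k =>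
    ⟨B.contSection_smul_s9 g hgGC.1 (ψ k) (hψcont k), Kg, hKgc,
      fun x hx => by simp [hF, hKg0 x hx]⟩
  have hFbd : ∀ k x, ‖F k x‖ ≤ M := by
    intro k x
    rw [hF]
    simp only
    rw [norm_smul, Complex.norm_real, Real.norm_eq_abs, abs_of_nonneg (hψ0 k x)]
    exact le_trans (mul_le_mul_of_nonneg_right (hψ1 k x) (norm_nonneg _))
      (by simpa using hMg x)
  have hFconv : ∀ x, Tendsto (fun k => (⟨x, F k x⟩ : (x : G) × Fib x)) atTop
      (@nhds _ B.topTotal ⟨x, f x⟩) := by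
    letI : TopologicalSpace ((x : G) × Fib x) := B.topTotal
    intro x
    by_cases hx : g x = 0
    · have heq : (fun k => (⟨x, F k x⟩ : (x : G) × Fib x)) =
          fun _ => (⟨x, f x⟩ : (x : G) × Fib x) := by
        funext k
        simp [hF, hf, hx]
      rw [heq]
      exact tendsto_const_nhds
    · refine B.tendsto_fiber_of_norm x _ _ ?_
      have hφnx : 0 < φseq n x := by
        rcases (hφseq_nonneg n x).lt_or_eq with h' | h'
        · exact h'
        · exact absurd (hgz x h'.symm) hx
      have hden : Tendsto (fun k : ℕ => φseq n x + ((k : ℝ) + 1)⁻¹) atTop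
          (𝓝 (φseq n x)) := by
        have := (tendsto_const_nhds :
            Tendsto (fun _ : ℕ => φseq n x) atTop (𝓝 (φseq n x))).add
          tendsto_one_div_add_atTop_nhds_zero_nat
        simpa [one_div] using this
      have hq : Tendsto (fun k => φseq k x / (φseq n x + ((k : ℝ) + 1)⁻¹)) atTop
          (𝓝 (φ x / φseq n x)) := (hφseq_lim x).div hden (ne_of_gt hφnx)
      have hψlim : Tendsto (fun k => ψ k x) atTop (𝓝 (h x)) := by
        have hmin : Tendsto (fun k => ψ k x) atTop (𝓝 (min 1 (φ x / φseq n x))) :=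
          tendsto_const_nhds.min hq
        rwa [min_eq_right (h_le_one x)] at hmin
      have hnorm : ∀ k, ‖F k x - f x‖ = |ψ k x - h x| * ‖g x‖ := by
        intro k
        have heq : F k x - f x = ((ψ k x - h x : ℝ) : ℂ) • g x := by
          rw [hF, hf]
          push_cast
          rw [sub_smul]
        rw [heq, norm_smul, Complex.norm_real, Real.norm_eq_abs]
      have hlim0 : Tendsto (fun k => |ψ k x - h x| * ‖g x‖) atTop (𝓝 0) := by
        have := ((hψlim.sub (tendsto_const_nhds :
            Tendsto (fun _ : ℕ => h x) atTop (𝓝 (h x)))).abs).mul_const ‖g x‖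
        simpa using this
      simpa only [hnorm] using hlim0
  have hfSC : B.MemSigmaC f := by
    refine ⟨⟨M, fun x => ?_⟩, F, Kg, M, hFGC, hFbd, hKgc,
      fun k x hx => by simp [hF, hKg0 x hx], hFconv⟩
    rw [hf_norm]
    exact le_trans (mul_le_mul_of_nonneg_right (h_le_one x) (norm_nonneg _))
      (by simpa using hMg x)
  have hmem : ‖∫ x, ε x (f x) ∂μσ‖ ∈ { r : ℝ | ∃ f, B.MemSigmaC f ∧
      (∀ x, ‖f x‖ ≤ φ x) ∧ r = ‖∫ x, ε x (f x) ∂μσ‖ } := ⟨f, hfSC, hf_le_φ, rfl⟩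
  have hle : ‖∫ x, ε x (f x) ∂μσ‖ ≤ sSup { r : ℝ | ∃ f, B.MemSigmaC f ∧
      (∀ x, ‖f x‖ ≤ φ x) ∧ r = ‖∫ x, ε x (f x) ∂μσ‖ } := le_csSup hbddT hmem
  have hσg : σ g = ∫ x, ε x (g x) ∂μσ := hrep g hgGC
  have hlow : ‖σ g‖ - ‖(∫ x, ε x (g x) ∂μσ) - ∫ x, ε x (f x) ∂μσ‖ ≤
      ‖∫ x, ε x (f x) ∂μσ‖ := by
    rw [hσg]
    linarith [norm_sub_norm_le (∫ x, ε x (g x) ∂μσ) (∫ x, ε x (f x) ∂μσ),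
      norm_sub_rev (∫ x, ε x (g x) ∂μσ) (∫ x, ε x (f x) ∂μσ)]
  have hrσ : (∫ x, φseq n x ∂μσ) - δ / 2 < ‖σ g‖ := hr ▸ hrgt
  linarith [hdiff, hle, hlow, hrσ, hn]
end

section
/- Let p : 𝔄 → X be an upper semicontinuous Banach bundle. Then scalar multiplication is jointly continuous: the map (λ, a) ↦ λ·a is continuous from ℂ × 𝔄 to 𝔄. -/
open MeasureTheory Filter Topology Set

/-- In an upper semicontinuous Banach bundle, scalar multiplication is
jointly continuous as a map `ℂ × 𝔄 → 𝔄`. -/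
theorem USCBanachBundle.continuous_smul_joint
    {X : Type} [TopologicalSpace X] {Fib : X → Type}
    [∀ x, NormedAddCommGroup (Fib x)] [∀ x, NormedSpace ℂ (Fib x)]
    [∀ x, CompleteSpace (Fib x)]
    (B : USCBanachBundle X Fib) :
    @Continuous (ℂ × ((x : X) × Fib x)) ((x : X) × Fib x)
      (@instTopologicalSpaceProd _ _ inferInstance B.topTotal) B.topTotal
      (fun q => ⟨q.2.1, q.1 • q.2.2⟩) := by

  letI := B.topTotal
  rw [continuous_iff_continuousAt]
  rintro ⟨c₀, a₀⟩
  obtain ⟨x₀, v₀⟩ := a₀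
  unfold ContinuousAt
  -- the two summands
  have hsnd : Tendsto (fun q : ℂ × ((x : X) × Fib x) => q.2)
      (nhds (c₀, (⟨x₀, v₀⟩ : (x : X) × Fib x))) (nhds (⟨x₀, v₀⟩ : (x : X) × Fib x)) :=
    continuous_snd.tendsto _
  have hfst : Tendsto (fun q : ℂ × ((x : X) × Fib x) => q.1)
      (nhds (c₀, (⟨x₀, v₀⟩ : (x : X) × Fib x))) (nhds c₀) :=
    continuous_fst.tendsto _
  have h1 : Tendsto (fun q : ℂ × ((x : X) × Fib x) => (⟨q.2.1, c₀ • q.2.2⟩ : (x : X) × Fib x))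
      (nhds (c₀, (⟨x₀, v₀⟩ : (x : X) × Fib x))) (nhds (⟨x₀, c₀ • v₀⟩ : (x : X) × Fib x)) :=
    ((B.continuous_smul c₀).tendsto _).comp hsnd
  -- eventual bound on the norm of the second coordinate
  have hU : ∀ᶠ q : ℂ × ((x : X) × Fib x) in nhds (c₀, (⟨x₀, v₀⟩ : (x : X) × Fib x)),
      ‖q.2.2‖ < ‖v₀‖ + 1 := by
    have hop : IsOpen {b : (x : X) × Fib x | ‖b.2‖ < ‖v₀‖ + 1} := B.isOpen_norm_lt _
    have hmem : (⟨x₀, v₀⟩ : (x : X) × Fib x) ∈ {b : (x : X) × Fib x | ‖b.2‖ < ‖v₀‖ + 1} := by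
      simp
    exact hsnd.eventually (hop.mem_nhds hmem)
  have hnorm : Tendsto (fun q : ℂ × ((x : X) × Fib x) => ‖(q.1 - c₀) • q.2.2‖)
      (nhds (c₀, (⟨x₀, v₀⟩ : (x : X) × Fib x))) (nhds 0) := by
    have hub : Tendsto (fun q : ℂ × ((x : X) × Fib x) => ‖q.1 - c₀‖ * (‖v₀‖ + 1))
        (nhds (c₀, (⟨x₀, v₀⟩ : (x : X) × Fib x))) (nhds 0) := by
      have : Tendsto (fun q : ℂ × ((x : X) × Fib x) => ‖q.1 - c₀‖)
          (nhds (c₀, (⟨x₀, v₀⟩ : (x : X) × Fib x))) (nhds 0) := by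
        have := (hfst.sub_const c₀).norm
        simpa using this
      simpa using this.mul_const (‖v₀‖ + 1)
    apply squeeze_zero' (Filter.Eventually.of_forall fun q => norm_nonneg _) _ hub
    filter_upwards [hU] with q hq
    rw [norm_smul]
    have : (0:ℝ) ≤ ‖q.1 - c₀‖ := norm_nonneg _
    nlinarith [norm_nonneg q.2.2]
  have h2 : Tendsto (fun q : ℂ × ((x : X) × Fib x) => (⟨q.2.1, (q.1 - c₀) • q.2.2⟩ : (x : X) × Fib x))
      (nhds (c₀, (⟨x₀, v₀⟩ : (x : X) × Fib x))) (nhds (⟨x₀, 0⟩ : (x : X) × Fib x)) := by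
    apply B.tendsto_zero
    · exact (B.continuous_proj.tendsto _).comp hsnd
    · exact hnorm
  -- combine via continuous_add
  set P : ℂ × ((x : X) × Fib x) →
      { q : ((x : X) × Fib x) × ((x : X) × Fib x) // q.1.1 = q.2.1 } :=
    fun q => ⟨((⟨q.2.1, c₀ • q.2.2⟩ : (x : X) × Fib x),
               (⟨q.2.1, (q.1 - c₀) • q.2.2⟩ : (x : X) × Fib x)), rfl⟩ with hP
  have hPt : Tendsto P (nhds (c₀, (⟨x₀, v₀⟩ : (x : X) × Fib x)))
      (nhds (⟨((⟨x₀, c₀ • v₀⟩ : (x : X) × Fib x), (⟨x₀, 0⟩ : (x : X) × Fib x)), rfl⟩ :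
        { q : ((x : X) × Fib x) × ((x : X) × Fib x) // q.1.1 = q.2.1 })) := by
    rw [tendsto_subtype_rng]
    exact h1.prodMk_nhds h2
  have hcomp := (B.continuous_add.tendsto _).comp hPt
  have hsum : ∀ q : ℂ × ((x : X) × Fib x),
      ((fun q : { q : ((x : X) × Fib x) × ((x : X) × Fib x) // q.1.1 = q.2.1 } =>
        (⟨q.1.1.1, q.1.1.2 + cast (congrArg Fib q.2.symm) q.1.2.2⟩ : (x : X) × Fib x)) ∘ P) q
        = (⟨q.2.1, q.1 • q.2.2⟩ : (x : X) × Fib x) := by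
    intro q
    show (⟨q.2.1, c₀ • q.2.2 + cast rfl ((q.1 - c₀) • q.2.2)⟩ : (x : X) × Fib x) = _
    rw [cast_eq]
    congr 1
    rw [sub_smul]
    abel
  rw [funext hsum] at hcomp
  have : c₀ • v₀ + cast rfl (0 : Fib x₀) = c₀ • v₀ := by rw [cast_eq, add_zero]
  simpa [this] using hcomp
end
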